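/- Assume X is a polyhedron. Fix β ∈ 𝒜 and set P = −𝒜ᵀX + N_β° ⊆ ℝ^𝒜, where 𝒜ᵀX = {(αᵀx)_{α∈𝒜} : x ∈ X} and N_β° = {w ∈ ℝ^𝒜 : wᵀν ≤ 0 for all ν ∈ N_β} is the polar cone of N_β. Then a vector ν ∈ N_β ∖ {0} is an X-circuit of 𝒜 if and only if there exists a face F of P whose outer normal cone N_P(F) = {w ∈ ℝ^𝒜 : zᵀw = σ_P(w) for all z ∈ F} equals the ray {tν : t ≥ 0}. Consequently, the set Λ_X(𝒜) of normalized X-circuits of 𝒜 is finite. -/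

import Mathlib

open Finset

/-- Dot product on `Fin n → ℝ`. -/
noncomputable def dotp {n : ℕ} (y x : Fin n → ℝ) : ℝ := ∑ i, y i * x i

/-- Support function `σ_X : ℝⁿ → ℝ ∪ {±∞}` of a set `X ⊆ ℝⁿ`. -/
noncomputable def suppFn {n : ℕ} (X : Set (Fin n → ℝ)) (y : Fin n → ℝ) : EReal :=
  ⨆ x ∈ X, ((dotp y x : ℝ) : EReal)

/-- The linear map `𝒜 : ℝ^𝒜 → ℝⁿ`, `ν ↦ Σ_α ν_α α`. -/
noncomputable def Amap {n m : ℕ} (A : Fin m → Fin n → ℝ) (ν : Fin m → ℝ) : Fin n → ℝ :=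
  fun j => ∑ i, ν i * A i j

/-- `N_β = {ν : ν_α ≥ 0 (α ≠ β), Σ ν_α = 0}`. -/
def Nbeta {m : ℕ} (b : Fin m) : Set (Fin m → ℝ) :=
  {ν | (∀ i, i ≠ b → 0 ≤ ν i) ∧ ∑ i, ν i = 0}

/-- Two vectors are proportional if one is a scalar multiple of the other. -/
def Proportional {m : ℕ} (u v : Fin m → ℝ) : Prop :=
  ∃ t : ℝ, u = t • v ∨ v = t • u

/-- The augmented support function `ν ↦ σ_X(-𝒜ν)`. -/
noncomputable def sigA {n m : ℕ} (X : Set (Fin n → ℝ)) (A : Fin m → Fin n → ℝ)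
    (ν : Fin m → ℝ) : EReal :=
  suppFn X (-(Amap A ν))

/-- The map `ν ↦ σ_X(-𝒜ν)` is affine on the segment `[ν1, ν2]`. -/
def SigmaAffineOnSeg {n m : ℕ} (X : Set (Fin n → ℝ)) (A : Fin m → Fin n → ℝ)
    (ν1 ν2 : Fin m → ℝ) : Prop :=
  ∀ t : ℝ, t ∈ Set.Icc (0:ℝ) 1 →
    sigA X A (t • ν1 + (1 - t) • ν2) =
      (t : EReal) * sigA X A ν1 + ((1 - t : ℝ) : EReal) * sigA X A ν2

/-- `ν` is an `X`-circuit of `𝒜` (with negative index allowed only at `b`). -/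
def IsXCircuit {n m : ℕ} (X : Set (Fin n → ℝ)) (A : Fin m → Fin n → ℝ)
    (b : Fin m) (ν : Fin m → ℝ) : Prop :=
  ν ∈ Nbeta b ∧ ν ≠ 0 ∧ sigA X A ν < ⊤ ∧
  ¬ ∃ (ν1 ν2 : Fin m → ℝ) (θ : ℝ), ν1 ∈ Nbeta b ∧ ν2 ∈ Nbeta b ∧
      ¬ Proportional ν1 ν2 ∧ θ ∈ Set.Ioo (0:ℝ) 1 ∧
      ν = θ • ν1 + (1 - θ) • ν2 ∧ SigmaAffineOnSeg X A ν1 ν2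

/-- All finite nonnegative combinations of elements of `S` (including `0`). -/
def coneHull {E : Type*} [AddCommMonoid E] [SMul ℝ E] (S : Set E) : Set E :=
  {x | ∃ (k : ℕ) (t : Fin k → ℝ) (v : Fin k → E),
    (∀ j, 0 ≤ t j) ∧ (∀ j, v j ∈ S) ∧ x = ∑ j, t j • v j}

/-- `v` is an edge generator of the convex cone `K`. -/
def IsEdgeGenerator {E : Type*} [AddCommMonoid E] [SMul ℝ E] (K : Set E) (v : E) : Prop :=
  v ≠ 0 ∧ v ∈ K ∧ ∀ u ∈ K, ∀ w ∈ K, v = u + w →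
    (∃ a : ℝ, 0 ≤ a ∧ u = a • v) ∧ (∃ b : ℝ, 0 ≤ b ∧ w = b • v)

/-- The `X`-AGE cone `C_X(𝒜, β)`, as a cone of coefficient vectors. -/
def AgeCone {n m : ℕ} (X : Set (Fin n → ℝ)) (A : Fin m → Fin n → ℝ) (b : Fin m) :
    Set (Fin m → ℝ) :=
  {c | (∀ i, i ≠ b → 0 ≤ c i) ∧ ∀ x ∈ X, 0 ≤ ∑ i, c i * Real.exp (dotp (A i) x)}

/-- The `X`-SAGE cone `C_X(𝒜) = Σ_β C_X(𝒜, β)`. -/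
def Sage {n m : ℕ} (X : Set (Fin n → ℝ)) (A : Fin m → Fin n → ℝ) : Set (Fin m → ℝ) :=
  {c | ∃ f : Fin m → (Fin m → ℝ), (∀ b, f b ∈ AgeCone X A b) ∧ c = ∑ b, f b}

/-- One summand of the relative entropy, with the conventions `0·log 0 = 0` and
`D = ∞` if `a > 0` while `c ≤ 0`. -/
noncomputable def relEnt (a c : ℝ) : EReal :=
  if a = 0 then 0 else if 0 < c then ((a * Real.log (a / c) : ℝ) : EReal) else ⊤

/-- The relative entropy `D(ν_{∖β}, e · c_{∖β})`. -/
noncomputable def relEntSum {m : ℕ} (b : Fin m) (ν c : Fin m → ℝ) : EReal :=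
  ∑ i ∈ Finset.univ.erase b, relEnt (ν i) (Real.exp 1 * c i)

/-- Condition (★): `ν ∈ N_β`, `ν ≠ 0`, `σ_X(-𝒜ν) + D(ν_{∖β}, e c_{∖β}) ≤ c_β`. -/
def StarCond {n m : ℕ} (X : Set (Fin n → ℝ)) (A : Fin m → Fin n → ℝ)
    (b : Fin m) (c ν : Fin m → ℝ) : Prop :=
  ν ∈ Nbeta b ∧ ν ≠ 0 ∧ sigA X A ν + relEntSum b ν c ≤ (c b : EReal)

/-- The `λ`-witnessed AGE cone `C_X(𝒜, λ)` for a normalized `λ` with `λ_β = -1`. -/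
noncomputable def WitnessCone {n m : ℕ} (X : Set (Fin n → ℝ)) (A : Fin m → Fin n → ℝ)
    (b : Fin m) (l : Fin m → ℝ) : Set (Fin m → ℝ) :=
  {c | (∀ i, i ≠ b → 0 ≤ c i) ∧
    (-(c b)) * Real.exp ((sigA X A l).toReal) ≤
      ∏ i ∈ Finset.univ.filter (fun i => 0 < l i), (c i / l i) ^ (l i)}

/-- Normalized `X`-circuits in `N_β`. -/
def LambdaB {n m : ℕ} (X : Set (Fin n → ℝ)) (A : Fin m → Fin n → ℝ) (b : Fin m) :
    Set (Fin m → ℝ) :=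
  {l | IsXCircuit X A b l ∧ l b = -1}

/-- All normalized `X`-circuits of `𝒜`. -/
def Lambda {n m : ℕ} (X : Set (Fin n → ℝ)) (A : Fin m → Fin n → ℝ) : Set (Fin m → ℝ) :=
  ⋃ b, LambdaB X A b

/-- Functional form `φ_λ = (λ, σ_X(-𝒜λ)) ∈ ℝ^𝒜 × ℝ`. -/
noncomputable def phiVec {n m : ℕ} (X : Set (Fin n → ℝ)) (A : Fin m → Fin n → ℝ)
    (l : Fin m → ℝ) : (Fin m → ℝ) × ℝ :=
  (l, (sigA X A l).toReal)

/-- Functional form as an affine function `φ_λ(y) = Σ y_α λ_α + σ_X(-𝒜λ)`. -/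
noncomputable def phiFun {n m : ℕ} (X : Set (Fin n → ℝ)) (A : Fin m → Fin n → ℝ)
    (l : Fin m → ℝ) (y : Fin m → ℝ) : ℝ :=
  (∑ i, y i * l i) + (sigA X A l).toReal

/-- The circuit graph `G_X(𝒜)`. -/
noncomputable def circuitGraph {n m : ℕ} (X : Set (Fin n → ℝ)) (A : Fin m → Fin n → ℝ) :
    Set ((Fin m → ℝ) × ℝ) :=
  coneHull ((phiVec X A '' Lambda X A) ∪ {((0 : Fin m → ℝ), (1 : ℝ))})

/-- The reduced normalized `X`-circuits `Λ*_X(𝒜)`. -/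
noncomputable def LambdaStar {n m : ℕ} (X : Set (Fin n → ℝ)) (A : Fin m → Fin n → ℝ) :
    Set (Fin m → ℝ) :=
  {l | l ∈ Lambda X A ∧ IsEdgeGenerator (circuitGraph X A) (phiVec X A l)}

/-- `λ`-witnessed AGE cone for a normalized circuit, with `β` recovered from `λ`. -/
noncomputable def WitnessConeL {n m : ℕ} (X : Set (Fin n → ℝ)) (A : Fin m → Fin n → ℝ)
    (l : Fin m → ℝ) : Set (Fin m → ℝ) :=
  ⋃ b ∈ {b : Fin m | l b = -1}, WitnessCone X A b l

/-- Dual cone of a set of coefficient vectors in `ℝ^𝒜`. -/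
def dualConeV {m : ℕ} (K : Set (Fin m → ℝ)) : Set (Fin m → ℝ) :=
  {v | ∀ c ∈ K, 0 ≤ ∑ i, v i * c i}

/-- Dual cone of a subset of `ℝ^𝒜 × ℝ`. -/
def dualConeP {m : ℕ} (K : Set ((Fin m → ℝ) × ℝ)) : Set ((Fin m → ℝ) × ℝ) :=
  {p | ∀ q ∈ K, 0 ≤ (∑ i, p.1 i * q.1 i) + p.2 * q.2}

/-- The basis functions `x ↦ exp(αᵀx)`, `α ∈ 𝒜`, are linearly independent on `X`. -/
def ExpLinIndep {n m : ℕ} (X : Set (Fin n → ℝ)) (A : Fin m → Fin n → ℝ) : Prop :=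
  LinearIndependent ℝ (fun i : Fin m => fun x : X => Real.exp (dotp (A i) (x : Fin n → ℝ)))

/-- `X` is a polyhedron: an intersection of finitely many closed halfspaces. -/
def IsPolyhedron {n : ℕ} (X : Set (Fin n → ℝ)) : Prop :=
  ∃ (k : ℕ) (a : Fin k → Fin n → ℝ) (bb : Fin k → ℝ),
    X = {x | ∀ i, dotp (a i) x ≤ bb i}

/-- Minkowski sum `Σ_{l ∈ Λ} C(l)` (finite sums, one summand per `l`;
the empty sum gives `{0}`). -/
def MinkSumOver {m : ℕ} (Λ : Set (Fin m → ℝ)) (C : (Fin m → ℝ) → Set (Fin m → ℝ)) :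
    Set (Fin m → ℝ) :=
  {c | ∃ (s : Finset (Fin m → ℝ)) (f : (Fin m → ℝ) → (Fin m → ℝ)),
    (↑s ⊆ Λ) ∧ (∀ l ∈ s, f l ∈ C l) ∧ c = ∑ l ∈ s, f l}

/-- The polar cone `N_β°`. -/
def polarN {m : ℕ} (b : Fin m) : Set (Fin m → ℝ) :=
  {w | ∀ ν ∈ Nbeta b, dotp w ν ≤ 0}

/-- The polyhedron `P = -𝒜ᵀX + N_β°`. -/
noncomputable def Pset {n m : ℕ} (X : Set (Fin n → ℝ)) (A : Fin m → Fin n → ℝ) (b : Fin m) :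
    Set (Fin m → ℝ) :=
  {p | ∃ x ∈ X, ∃ w ∈ polarN b, p = -(fun i => dotp (A i) x) + w}

/-- `F` is a face of the convex set `P`. -/
def IsFaceOf {E : Type*} [AddCommMonoid E] [Module ℝ E] (P F : Set E) : Prop :=
  F ⊆ P ∧ Convex ℝ F ∧ ∀ p ∈ P, ∀ q ∈ P, ∀ t : ℝ, t ∈ Set.Ioo (0:ℝ) 1 →
    t • p + (1 - t) • q ∈ F → p ∈ F ∧ q ∈ F

section XCAux

open Finset

variable {N : ℕ}

lemma dotp_comm (y x : Fin N → ℝ) : dotp y x = dotp x y :=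
  Finset.sum_congr rfl (fun i _ => mul_comm _ _)

lemma dotp_add_right (y a b : Fin N → ℝ) : dotp y (a + b) = dotp y a + dotp y b := by
  unfold dotp
  rw [← Finset.sum_add_distrib]
  exact Finset.sum_congr rfl (fun i _ => by simp [mul_add])

lemma dotp_smul_right (y : Fin N → ℝ) (c : ℝ) (x : Fin N → ℝ) :
    dotp y (c • x) = c * dotp y x := by
  unfold dotp
  rw [Finset.mul_sum]
  exact Finset.sum_congr rfl (fun i _ => by simp [Pi.smul_apply]; ring)

lemma dotp_smul_left (y : Fin N → ℝ) (c : ℝ) (x : Fin N → ℝ) :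
    dotp (c • y) x = c * dotp y x := by
  rw [dotp_comm, dotp_smul_right, dotp_comm]

lemma dotp_add_left (y a b : Fin N → ℝ) : dotp (a + b) y = dotp a y + dotp b y := by
  rw [dotp_comm, dotp_add_right, dotp_comm y a, dotp_comm y b]

lemma dotp_neg_right (y x : Fin N → ℝ) : dotp y (-x) = -dotp y x := by
  have : (-x) = (-1 : ℝ) • x := by funext i; simp
  rw [this, dotp_smul_right]; ring

lemma dotp_neg_left (y x : Fin N → ℝ) : dotp (-y) x = -dotp y x := by
  rw [dotp_comm, dotp_neg_right, dotp_comm]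

lemma dotp_zero_right (y : Fin N → ℝ) : dotp y 0 = 0 := by
  unfold dotp; simp

lemma dotp_zero_left (y : Fin N → ℝ) : dotp 0 y = 0 := by
  rw [dotp_comm, dotp_zero_right]

lemma dotp_sum_right {κ : Type*} (s : Finset κ) (y : Fin N → ℝ) (f : κ → Fin N → ℝ) :
    dotp y (∑ j ∈ s, f j) = ∑ j ∈ s, dotp y (f j) := by
  classical
  refine Finset.induction_on s (by simp [dotp_zero_right]) ?_
  intro a s' hx ih
  rw [Finset.sum_insert hx, dotp_add_right, ih, Finset.sum_insert hx]

lemma dotp_single (y : Fin N → ℝ) (i : Fin N) (c : ℝ) :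
    dotp y (Pi.single i c) = y i * c := by
  unfold dotp
  rw [Finset.sum_eq_single i]
  · simp
  · intro j _ hj; simp [Pi.single_apply, hj]
  · intro h; exact absurd (Finset.mem_univ i) h

/-! ### suppFn lemmas -/

lemma suppFn_le_coe {X : Set (Fin N → ℝ)} {y : Fin N → ℝ} {M : ℝ}
    (h : ∀ x ∈ X, dotp y x ≤ M) : suppFn X y ≤ (M : EReal) :=
  iSup₂_le fun x hx => EReal.coe_le_coe_iff.2 (h x hx)

lemma coe_le_suppFn {X : Set (Fin N → ℝ)} {y x : Fin N → ℝ} (hx : x ∈ X) :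
    ((dotp y x : ℝ) : EReal) ≤ suppFn X y :=
  le_iSup₂ (f := fun x (_ : x ∈ X) => ((dotp y x : ℝ) : EReal)) x hx

lemma suppFn_eq_coe {X : Set (Fin N → ℝ)} {y z : Fin N → ℝ} {M : ℝ} (hz : z ∈ X)
    (hM : dotp y z = M) (h : ∀ x ∈ X, dotp y x ≤ M) : suppFn X y = (M : EReal) :=
  le_antisymm (suppFn_le_coe h) (by rw [← hM]; exact coe_le_suppFn hz)

lemma suppFn_eq_top {X : Set (Fin N → ℝ)} {y : Fin N → ℝ}
    (h : ∀ M : ℝ, ∃ x ∈ X, M ≤ dotp y x) : suppFn X y = ⊤ := by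
  by_contra hne
  have hlt : suppFn X y < ⊤ := lt_of_le_of_ne le_top hne
  obtain ⟨r, hr1, -⟩ := EReal.lt_iff_exists_real_btwn.1 hlt
  obtain ⟨x, hx, hxr⟩ := h r
  exact absurd (lt_of_le_of_lt (coe_le_suppFn hx) hr1) (by
    exact not_lt.2 (EReal.coe_le_coe_iff.2 hxr))

lemma suppFn_ne_bot {X : Set (Fin N → ℝ)} (hX : X.Nonempty) (y : Fin N → ℝ) :
    suppFn X y ≠ ⊥ := by
  obtain ⟨x, hx⟩ := hX
  intro h
  have := coe_le_suppFn (y := y) hx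
  rw [h] at this
  exact absurd this (by simp)

end XCAux
section Cones

open Finset

variable {N : ℕ}

/-- The cone generated by a finite family of vectors. -/
def ConeOf {N : ℕ} {κ : Type} [Fintype κ] (r : κ → Fin N → ℝ) : Set (Fin N → ℝ) :=
  {x | ∃ μ : κ → ℝ, (∀ j, 0 ≤ μ j) ∧ x = ∑ j, μ j • r j}

lemma zero_mem_coneOf {κ : Type} [Fintype κ] (r : κ → Fin N → ℝ) : 0 ∈ ConeOf r :=
  ⟨0, fun _ => le_refl _, by simp⟩

lemma generator_mem_coneOf {κ : Type} [Fintype κ] (r : κ → Fin N → ℝ) (j : κ) :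
    r j ∈ ConeOf r := by
  classical
  refine ⟨fun j' => if j' = j then 1 else 0, fun j' => by positivity, ?_⟩
  symm
  calc ∑ j', (if j' = j then (1:ℝ) else 0) • r j'
      = ∑ j', (if j' = j then r j' else 0) :=
        Finset.sum_congr rfl (fun j' _ => by split_ifs <;> simp)
    _ = r j := by rw [Finset.sum_ite_eq' univ j fun j' => r j']; simp

lemma add_mem_coneOf {κ : Type} [Fintype κ] {r : κ → Fin N → ℝ} {x y : Fin N → ℝ}
    (hx : x ∈ ConeOf r) (hy : y ∈ ConeOf r) : x + y ∈ ConeOf r := by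
  obtain ⟨μ, hμ, rfl⟩ := hx
  obtain ⟨η, hη, rfl⟩ := hy
  exact ⟨μ + η, fun j => add_nonneg (hμ j) (hη j), by
    rw [← Finset.sum_add_distrib]
    exact Finset.sum_congr rfl fun j _ => by simp [add_smul]⟩

lemma smul_mem_coneOf {κ : Type} [Fintype κ] {r : κ → Fin N → ℝ} {c : ℝ} {x : Fin N → ℝ}
    (hc : 0 ≤ c) (hx : x ∈ ConeOf r) : c • x ∈ ConeOf r := by
  obtain ⟨μ, hμ, rfl⟩ := hx
  exact ⟨fun j => c * μ j, fun j => mul_nonneg hc (hμ j), by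
    rw [Finset.smul_sum]
    exact Finset.sum_congr rfl fun j _ => smul_smul c (μ j) (r j)⟩

lemma sum_smul_mem_coneOf {κ κ' : Type} [Fintype κ] [Fintype κ'] {r : κ → Fin N → ℝ}
    (c : κ' → ℝ) (g : κ' → Fin N → ℝ) (hc : ∀ j', 0 ≤ c j')
    (hg : ∀ j', g j' ∈ ConeOf r) : (∑ j', c j' • g j') ∈ ConeOf r := by
  classical
  refine Finset.sum_induction _ (· ∈ ConeOf r) (fun _ _ => add_mem_coneOf)
    (zero_mem_coneOf r) ?_
  intro j' _
  exact smul_mem_coneOf (hc j') (hg j')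

/-- Double description step: intersecting a finitely generated cone with a halfspace. -/
theorem coneOf_halfspace {κ : Type} [Fintype κ] (r : κ → Fin N → ℝ) (a : Fin N → ℝ) :
    ∃ (κ' : Type) (_ : Fintype κ') (r' : κ' → Fin N → ℝ),
      ConeOf r ∩ {x | dotp a x ≤ 0} = ConeOf r' := by
  classical
  set e : κ → ℝ := fun j => dotp a (r j) with he
  refine ⟨κ ⊕ κ × κ, inferInstance, Sum.elim (fun j => if e j ≤ 0 then r j else 0)
    (fun p => if e p.1 < 0 ∧ 0 < e p.2 then e p.2 • r p.1 + (-(e p.1)) • r p.2 else 0), ?_⟩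
  ext x
  constructor
  · rintro ⟨⟨μ, hμ, rfl⟩, hx⟩
    have hsum : ∑ j, μ j * e j ≤ 0 := by
      have : dotp a (∑ j, μ j • r j) = ∑ j, μ j * e j := by
        rw [dotp_sum_right]
        exact Finset.sum_congr rfl fun j _ => by rw [dotp_smul_right]
      rw [← this]; exact hx
    set Av : ℝ := ∑ j ∈ univ.filter (fun j => 0 < e j), μ j * e j with hAv
    set Bv : ℝ := ∑ j ∈ univ.filter (fun j => e j < 0), μ j * (-(e j)) with hBv
    have hA0 : 0 ≤ Av := Finset.sum_nonneg fun j hj => by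
      have := (Finset.mem_filter.1 hj).2
      exact mul_nonneg (hμ j) (le_of_lt this)
    have hB0 : 0 ≤ Bv := Finset.sum_nonneg fun j hj => by
      have := (Finset.mem_filter.1 hj).2
      exact mul_nonneg (hμ j) (by linarith)
    have hAB : Av ≤ Bv := by
      have hsplit : ∑ j, μ j * e j =
          Av + ∑ j ∈ univ.filter (fun j => ¬ 0 < e j), μ j * e j :=
        (Finset.sum_filter_add_sum_filter_not univ (fun j => 0 < e j) _).symm
      have hneg : ∑ j ∈ univ.filter (fun j => ¬ 0 < e j), μ j * e j = -Bv := by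
        have h1 : Bv = ∑ j ∈ univ.filter (fun j => ¬ 0 < e j), μ j * (-(e j)) := by
          rw [hBv]
          refine Finset.sum_subset (fun j hj => ?_) (fun j hj1 hj2 => ?_)
          · simp only [Finset.mem_filter, Finset.mem_univ, true_and] at hj ⊢
            linarith [hj]
          · simp only [Finset.mem_filter, Finset.mem_univ, true_and] at hj1 hj2
            have : e j = 0 := by push_neg at hj2; linarith
            simp [this]
        have h2 : ∑ j ∈ univ.filter (fun j => ¬ 0 < e j), μ j * e j
            + ∑ j ∈ univ.filter (fun j => ¬ 0 < e j), μ j * (-(e j)) = 0 := by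
          rw [← Finset.sum_add_distrib]
          exact Finset.sum_eq_zero (fun j _ => by ring)
        linarith
      rw [hsplit, hneg] at hsum
      linarith
    have hABdiv : Av / Bv ≤ 1 := by
      rcases eq_or_lt_of_le hB0 with hB | hB
      · have : Av = 0 := le_antisymm (by rw [hB]; exact hAB) hA0
        simp [this]
      · exact div_le_one_of_le₀ hAB (le_of_lt hB)
    refine ⟨Sum.elim (fun j => if e j < 0 then (1 - Av/Bv) * μ j else μ j)
      (fun p => if e p.1 < 0 ∧ 0 < e p.2 then μ p.1 * μ p.2 / Bv else 0), ?_, ?_⟩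
    · intro j'
      rcases j' with j | p
      · simp only [Sum.elim_inl]
        split_ifs
        · exact mul_nonneg (by linarith) (hμ j)
        · exact hμ j
      · simp only [Sum.elim_inr]
        split_ifs
        · exact div_nonneg (mul_nonneg (hμ p.1) (hμ p.2)) hB0
        · exact le_refl _
    · rw [Fintype.sum_sum_type]
      have hinl : (∑ j, (Sum.elim (fun j => if e j < 0 then (1 - Av/Bv) * μ j else μ j)
            (fun p : κ × κ => if e p.1 < 0 ∧ 0 < e p.2 then μ p.1 * μ p.2 / Bv else 0) (Sum.inl j)) •
            (Sum.elim (fun j => if e j ≤ 0 then r j else 0)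
            (fun p : κ × κ => if e p.1 < 0 ∧ 0 < e p.2 then e p.2 • r p.1 + (-(e p.1)) • r p.2 else 0)
            (Sum.inl j)))
          = ∑ j, (if e j < 0 then (1 - Av/Bv) * μ j else if 0 < e j then 0 else μ j) • r j := by
        refine Finset.sum_congr rfl fun j _ => ?_
        simp only [Sum.elim_inl]
        rcases lt_trichotomy (e j) 0 with h | h | h
        · rw [if_pos h, if_pos (le_of_lt h), if_pos h]
        · rw [if_neg (by rw [h]; exact lt_irrefl 0), if_pos (le_of_eq h),
            if_neg (by rw [h]; exact lt_irrefl 0), if_neg (by rw [h]; exact lt_irrefl 0)]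
        · rw [if_neg (not_lt.2 (le_of_lt h)), if_neg (not_le.2 h),
            if_neg (not_lt.2 (le_of_lt h)), if_pos h]
          simp
      have hBzero : Bv = 0 → ∀ j, 0 < e j → μ j = 0 := by
        intro hB j hj
        have hAz : ∑ j ∈ univ.filter (fun j => 0 < e j), μ j * e j = 0 := by
          rw [← hAv]; exact le_antisymm (by rw [← hB]; exact hAB) hA0
        have hterm := (Finset.sum_eq_zero_iff_of_nonneg (fun j' hj' => by
          have := (Finset.mem_filter.1 hj').2
          exact mul_nonneg (hμ j') (le_of_lt this))).1 hAz j
          (Finset.mem_filter.2 ⟨Finset.mem_univ j, hj⟩)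
        rcases mul_eq_zero.1 hterm with h' | h'
        · exact h'
        · exact absurd h' (ne_of_gt hj)
      have hinr : (∑ p : κ × κ, (Sum.elim (fun j => if e j < 0 then (1 - Av/Bv) * μ j else μ j)
            (fun p : κ × κ => if e p.1 < 0 ∧ 0 < e p.2 then μ p.1 * μ p.2 / Bv else 0) (Sum.inr p)) •
            (Sum.elim (fun j => if e j ≤ 0 then r j else 0)
            (fun p : κ × κ => if e p.1 < 0 ∧ 0 < e p.2 then e p.2 • r p.1 + (-(e p.1)) • r p.2 else 0)
            (Sum.inr p)))
          = (∑ j, (if e j < 0 then μ j / Bv * Av else 0) • r j)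
            + ∑ j, (if 0 < e j then μ j / Bv * Bv else 0) • r j := by
        simp only [Sum.elim_inr]
        have hterm : ∀ p : κ × κ, ((if e p.1 < 0 ∧ 0 < e p.2 then μ p.1 * μ p.2 / Bv else 0) •
              (if e p.1 < 0 ∧ 0 < e p.2 then e p.2 • r p.1 + (-(e p.1)) • r p.2 else 0))
            = (if e p.1 < 0 ∧ 0 < e p.2 then (μ p.1 * μ p.2 / Bv * e p.2) • r p.1 else 0)
              + (if e p.1 < 0 ∧ 0 < e p.2 then (μ p.1 * μ p.2 / Bv * (-(e p.1))) • r p.2 else 0) := by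
          intro p
          split_ifs with h
          · rw [smul_add, smul_smul, smul_smul]
          · simp
        rw [Finset.sum_congr rfl (fun p _ => hterm p), Finset.sum_add_distrib]
        congr 1
        · rw [Fintype.sum_prod_type]
          refine Finset.sum_congr rfl fun j1 _ => ?_
          by_cases h1 : e j1 < 0
          · have hstep : ∀ j2, (if e j1 < 0 ∧ 0 < e j2 then (μ j1 * μ j2 / Bv * e j2) • r j1 else 0)
                = (if 0 < e j2 then μ j1 / Bv * (μ j2 * e j2) else 0) • r j1 := by
              intro j2
              split_ifs with h2 h3 h4
              · congr 1; ring
              · exact absurd h2.2 h3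
              · exact absurd ⟨h1, h4⟩ h2
              · simp
            rw [Finset.sum_congr rfl (fun j2 _ => hstep j2), ← Finset.sum_smul, if_pos h1]
            congr 1
            rw [hAv, Finset.sum_filter, Finset.mul_sum]
            refine Finset.sum_congr rfl fun j2 _ => ?_
            split_ifs <;> simp
          · rw [if_neg h1, zero_smul]
            exact Finset.sum_eq_zero fun j2 _ => if_neg (fun hc => h1 hc.1)
        · rw [Fintype.sum_prod_type, Finset.sum_comm]
          refine Finset.sum_congr rfl fun j2 _ => ?_
          by_cases h2 : 0 < e j2
          · have hstep : ∀ j1, (if e j1 < 0 ∧ 0 < e j2 then (μ j1 * μ j2 / Bv * (-(e j1))) • r j2 else 0)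
                = (if e j1 < 0 then μ j2 / Bv * (μ j1 * (-(e j1))) else 0) • r j2 := by
              intro j1
              split_ifs with h3 h4 h5
              · congr 1; ring
              · exact absurd h3.1 h4
              · exact absurd ⟨h5, h2⟩ h3
              · simp
            rw [Finset.sum_congr rfl (fun j1 _ => hstep j1), ← Finset.sum_smul, if_pos h2]
            congr 1
            rw [hBv, Finset.sum_filter, Finset.mul_sum]
            refine Finset.sum_congr rfl fun j1 _ => ?_
            split_ifs <;> simp
          · rw [if_neg h2, zero_smul]
            exact Finset.sum_eq_zero fun j1 _ => if_neg (fun hc => h2 hc.2)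
      rw [hinl, hinr]
      rw [← Finset.sum_add_distrib, ← Finset.sum_add_distrib]
      refine Finset.sum_congr rfl fun j _ => ?_
      rw [← add_smul, ← add_smul]
      congr 1
      split_ifs with h1 h2 h3
      · linarith
      · ring
      · rcases eq_or_lt_of_le hB0 with hB | hB
        · rw [hBzero hB.symm j h3]; ring
        · rw [div_mul_cancel₀ _ (ne_of_gt hB)]; ring
      · ring
  · rintro ⟨μ', hμ', rfl⟩
    constructor
    · refine sum_smul_mem_coneOf _ _ hμ' ?_
      intro j'
      rcases j' with j | p
      · simp only [Sum.elim_inl]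
        split_ifs
        · exact generator_mem_coneOf r j
        · exact zero_mem_coneOf r
      · simp only [Sum.elim_inr]
        split_ifs with h
        · exact add_mem_coneOf (smul_mem_coneOf (le_of_lt h.2) (generator_mem_coneOf r p.1))
            (smul_mem_coneOf (by linarith [h.1]) (generator_mem_coneOf r p.2))
        · exact zero_mem_coneOf r
    · show dotp a _ ≤ 0
      rw [dotp_sum_right]
      refine Finset.sum_nonpos fun j' _ => ?_
      rw [dotp_smul_right]
      refine mul_nonpos_of_nonneg_of_nonpos (hμ' j') ?_
      rcases j' with j | p
      · simp only [Sum.elim_inl]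
        split_ifs with h
        · exact h
        · rw [dotp_zero_right]
      · simp only [Sum.elim_inr]
        split_ifs with h
        · rw [dotp_add_right, dotp_smul_right, dotp_smul_right]
          show e p.2 * e p.1 + -(e p.1) * e p.2 ≤ 0
          exact le_of_eq (by ring)
        · rw [dotp_zero_right]

end Cones
section VRep

open Finset

variable {N : ℕ}

theorem cone_of_halfspaces (L : List (Fin N → ℝ)) :
    ∃ (κ : Type) (_ : Fintype κ) (r : κ → Fin N → ℝ),
      {x : Fin N → ℝ | ∀ a ∈ L, dotp a x ≤ 0} = ConeOf r := by
  classical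
  induction L with
  | nil =>
    refine ⟨Fin N × Bool, inferInstance,
      fun p => if p.2 then Pi.single p.1 1 else -(Pi.single p.1 1), ?_⟩
    ext x
    constructor
    · intro _
      refine ⟨fun p => if p.2 then max (x p.1) 0 else max (-(x p.1)) 0,
        fun p => by dsimp only; split_ifs <;> positivity, ?_⟩
      rw [Fintype.sum_prod_type]
      have hterm : ∀ i : Fin N,
          (∑ b : Bool, (if b then max (x i) 0 else max (-(x i)) 0) •
            (if b then Pi.single i (1:ℝ) else -(Pi.single i 1) : Fin N → ℝ))
            = (Pi.single i (x i) : Fin N → ℝ) := by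
        intro i
        rw [Fintype.sum_bool]
        funext kk
        simp only [if_true, if_false, Bool.false_eq_true, Pi.add_apply, Pi.smul_apply,
          Pi.neg_apply, smul_eq_mul, Pi.single_apply, mul_ite, mul_one, mul_zero, mul_neg]
        split_ifs with h
        · have := max_zero_sub_max_neg_zero_eq_self (x i)
          linarith
        · ring
      rw [Finset.sum_congr rfl (fun i _ => hterm i), Finset.univ_sum_single]
    · intro _ a ha
      exact absurd ha List.not_mem_nil
  | cons a L ih =>
    obtain ⟨κ, _, r, hr⟩ := ih
    obtain ⟨κ', i', r', hr'⟩ := coneOf_halfspace r a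
    refine ⟨κ', i', r', ?_⟩
    rw [← hr']
    ext x
    simp only [Set.mem_setOf_eq, List.mem_cons, Set.mem_inter_iff]
    constructor
    · intro h
      exact ⟨(Set.ext_iff.1 hr x).1 (fun c hc => h c (Or.inr hc)), h a (Or.inl rfl)⟩
    · rintro ⟨h1, h2⟩ c hc
      rcases hc with rfl | hc
      · exact h2
      · exact (Set.ext_iff.1 hr x).2 h1 c hc

/-- V-representation: convex hull of finitely many points plus finitely generated cone. -/
def VSet {N : ℕ} {ι κ : Type} [Fintype ι] [Fintype κ] (v : ι → Fin N → ℝ)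
    (r : κ → Fin N → ℝ) : Set (Fin N → ℝ) :=
  {x | ∃ (lam : ι → ℝ) (mu : κ → ℝ), (∀ i, 0 ≤ lam i) ∧ (∀ j, 0 ≤ mu j) ∧
    ∑ i, lam i = 1 ∧ x = ∑ i, lam i • v i + ∑ j, mu j • r j}

lemma dotp_snoc (u x : Fin N → ℝ) (c t : ℝ) :
    dotp (Fin.snoc u c) (Fin.snoc x t) = dotp u x + c * t := by
  show (∑ i : Fin (N+1), _) = _
  rw [Fin.sum_univ_castSucc]
  simp [Fin.snoc_castSucc, Fin.snoc_last, dotp]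

theorem polyhedron_vrep {n : ℕ} {X : Set (Fin n → ℝ)} (hX : IsPolyhedron X) :
    ∃ (ι κ : Type) (_ : Fintype ι) (_ : Fintype κ) (v : ι → Fin n → ℝ)
      (r : κ → Fin n → ℝ), X = VSet v r := by
  classical
  obtain ⟨k, a, bb, hXdef⟩ := hX
  set cl : Fin (n+1) → ℝ := Fin.snoc (0 : Fin n → ℝ) (-1) with hcl
  set L : List (Fin (n+1) → ℝ) := cl :: List.ofFn (fun i => Fin.snoc (a i) (-(bb i))) with hL
  obtain ⟨kh, _, R, hR⟩ := cone_of_halfspaces L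
  have hmemC : ∀ y : Fin (n+1) → ℝ, y ∈ ConeOf R ↔ (∀ c ∈ L, dotp c y ≤ 0) :=
    fun y => by rw [← Set.ext_iff.1 hR y]; exact Iff.rfl
  have hXmem : ∀ x : Fin n → ℝ, x ∈ X ↔ Fin.snoc x 1 ∈ ConeOf R := by
    intro x
    rw [hmemC]
    constructor
    · intro hx c hc
      rcases List.mem_cons.1 hc with rfl | hc
      · rw [hcl, dotp_snoc, dotp_zero_left]
        norm_num
      · obtain ⟨i, rfl⟩ := List.mem_ofFn.1 hc
        rw [dotp_snoc]
        have hx' : x ∈ {x | ∀ i, dotp (a i) x ≤ bb i} := hXdef ▸ hx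
        have := hx' i
        have this : dotp (a i) x ≤ bb i := this
        linarith
    · intro hy
      rw [hXdef]
      intro i
      have := hy _ (List.mem_cons_of_mem _ (List.mem_ofFn.2 ⟨i, rfl⟩))
      rw [dotp_snoc] at this
      linarith
  have hτ0 : ∀ j, 0 ≤ R j (Fin.last n) := by
    intro j
    have hgen := generator_mem_coneOf R j
    have := (hmemC (R j)).1 hgen cl List.mem_cons_self
    conv at this => rw [← Fin.snoc_init_self (R j)]
    rw [hcl, dotp_snoc, dotp_zero_left] at this
    linarith
  haveI : DecidablePred (fun j : kh => 0 < R j (Fin.last n)) := Classical.decPred _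
  refine ⟨{j : kh // 0 < R j (Fin.last n)}, {j : kh // ¬ 0 < R j (Fin.last n)}, inferInstance, inferInstance,
    fun i => (1 / R i.1 (Fin.last n)) • Fin.init (R i.1), fun j => Fin.init (R j.1), ?_⟩
  ext x
  constructor
  · intro hx
    obtain ⟨μ, hμ, hy⟩ := (hXmem x).1 hx
    have hxval : ∀ i : Fin n, x i = ∑ j, μ j * R j (Fin.castSucc i) := by
      intro i
      have := congrFun hy (Fin.castSucc i)
      rw [Finset.sum_apply] at this
      simpa [Fin.snoc_castSucc] using this
    have hone : (1:ℝ) = ∑ j, μ j * R j (Fin.last n) := by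
      have := congrFun hy (Fin.last n)
      rw [Finset.sum_apply] at this
      simpa [Fin.snoc_last] using this
    have hzero : (∑ j : {j : kh // ¬ 0 < R j (Fin.last n)}, μ j.1 * R j.1 (Fin.last n)) = 0 :=
      Finset.sum_eq_zero fun j _ => by
        have : R j.1 (Fin.last n) = 0 := le_antisymm (not_lt.1 j.2) (hτ0 j.1)
        rw [this, mul_zero]
    have hsplit := Fintype.sum_subtype_add_sum_subtype (fun j : kh => 0 < R j (Fin.last n))
      (fun j => μ j * R j (Fin.last n))
    refine ⟨fun i => μ i.1 * R i.1 (Fin.last n), fun j => μ j.1,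
      fun i => mul_nonneg (hμ i.1) (le_of_lt i.2), fun j => hμ j.1, ?_, ?_⟩
    · linarith [hsplit, hzero, hone]
    · have hrw : ∀ i : {j : kh // 0 < R j (Fin.last n)},
          (μ i.1 * R i.1 (Fin.last n)) • ((1 / R i.1 (Fin.last n)) • Fin.init (R i.1)) = μ i.1 • Fin.init (R i.1) := by
        intro i
        rw [smul_smul]
        congr 1
        have := ne_of_gt i.2
        field_simp
      rw [Finset.sum_congr rfl (fun i _ => hrw i)]
      rw [Fintype.sum_subtype_add_sum_subtype (fun j : kh => 0 < R j (Fin.last n)) (fun j => μ j • Fin.init (R j))]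
      funext i
      rw [Finset.sum_apply]
      simpa [Fin.init] using hxval i
  · rintro ⟨lam, mu, hlam, hmu, hsum1, rfl⟩
    have hyC : (∑ i : {j : kh // 0 < R j (Fin.last n)}, (lam i / R i.1 (Fin.last n)) • R i.1
        + ∑ j : {j : kh // ¬ 0 < R j (Fin.last n)}, mu j • R j.1) ∈ ConeOf R := by
      refine ⟨fun j => if h : 0 < R j (Fin.last n) then lam ⟨j, h⟩ / R j (Fin.last n) else mu ⟨j, h⟩, ?_, ?_⟩
      · intro j
        dsimp only
        split_ifs with h
        · exact div_nonneg (hlam _) (le_of_lt h)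
        · exact hmu _
      · rw [← Fintype.sum_subtype_add_sum_subtype (fun j : kh => 0 < R j (Fin.last n))
            (fun j => (if h : 0 < R j (Fin.last n) then lam ⟨j, h⟩ / R j (Fin.last n) else mu ⟨j, h⟩) • R j)]
        congr 1
        · exact Finset.sum_congr rfl fun i _ => by rw [dif_pos i.2]
        · exact Finset.sum_congr rfl fun j _ => by rw [dif_neg j.2]
    have hkey : Fin.snoc (∑ i : {j : kh // 0 < R j (Fin.last n)},
          lam i • ((1 / R i.1 (Fin.last n)) • Fin.init (R i.1))
        + ∑ j : {j : kh // ¬ 0 < R j (Fin.last n)}, mu j • Fin.init (R j.1)) (1:ℝ)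
        = (∑ i : {j : kh // 0 < R j (Fin.last n)}, (lam i / R i.1 (Fin.last n)) • R i.1
          + ∑ j : {j : kh // ¬ 0 < R j (Fin.last n)}, mu j • R j.1) := by
      funext l
      refine Fin.lastCases ?_ (fun i0 => ?_) l
      · rw [Fin.snoc_last, Pi.add_apply, Finset.sum_apply, Finset.sum_apply]
        have h1 : ∀ i : {j : kh // 0 < R j (Fin.last n)},
            ((lam i / R i.1 (Fin.last n)) • R i.1) (Fin.last n) = lam i := by
          intro i
          have hne : R i.1 (Fin.last n) ≠ 0 := ne_of_gt i.2
          show (lam i / R i.1 (Fin.last n)) * R i.1 (Fin.last n) = lam i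
          field_simp
        have h2 : ∀ j : {j : kh // ¬ 0 < R j (Fin.last n)},
            (mu j • R j.1) (Fin.last n) = 0 := by
          intro j
          have hz : R j.1 (Fin.last n) = 0 := le_antisymm (not_lt.1 j.2) (hτ0 j.1)
          show mu j * R j.1 (Fin.last n) = 0
          rw [hz, mul_zero]
        rw [Finset.sum_congr rfl (fun i _ => h1 i), Finset.sum_congr rfl (fun j _ => h2 j)]
        simp [hsum1]
      · rw [Fin.snoc_castSucc, Pi.add_apply, Pi.add_apply, Finset.sum_apply,
          Finset.sum_apply, Finset.sum_apply, Finset.sum_apply]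
        congr 1
        refine Finset.sum_congr rfl fun i _ => ?_
        show lam i * ((1 / R i.1 (Fin.last n)) * Fin.init (R i.1) i0)
          = (lam i / R i.1 (Fin.last n)) * R i.1 (Fin.castSucc i0)
        have hinit : Fin.init (R i.1) i0 = R i.1 (Fin.castSucc i0) := rfl
        rw [hinit]; ring
    rw [hXmem _, hkey]
    exact hyC

end VRep
section VSetFacts

open Finset

variable {N : ℕ} {ι κ : Type} [Fintype ι] [Fintype κ]

lemma vertex_mem_vset (v : ι → Fin N → ℝ) (r : κ → Fin N → ℝ) (i0 : ι) :
    v i0 ∈ VSet v r := by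
  classical
  refine ⟨fun i => if i = i0 then 1 else 0, 0, fun i => by positivity,
    fun j => le_refl 0, by simp, ?_⟩
  have : ∀ i : ι, (if i = i0 then (1:ℝ) else 0) • v i = (if i = i0 then v i else 0) :=
    fun i => by split_ifs <;> simp
  rw [Finset.sum_congr rfl (fun i _ => this i), Finset.sum_ite_eq' univ i0 (fun i => v i)]
  simp

lemma add_ray_mem_vset {v : ι → Fin N → ℝ} {r : κ → Fin N → ℝ} {x : Fin N → ℝ}
    (hx : x ∈ VSet v r) {c : ℝ} (hc : 0 ≤ c) (j0 : κ) : x + c • r j0 ∈ VSet v r := by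
  classical
  obtain ⟨lam, mu, hlam, hmu, hsum, rfl⟩ := hx
  refine ⟨lam, fun j => mu j + (if j = j0 then c else 0), hlam,
    fun j => add_nonneg (hmu j) (by positivity), hsum, ?_⟩
  have : ∀ j : κ, (mu j + (if j = j0 then c else 0)) • r j
      = mu j • r j + (if j = j0 then c • r j else 0) := by
    intro j
    rw [add_smul]
    congr 1
    split_ifs <;> simp
  rw [Finset.sum_congr rfl (fun j _ => this j), Finset.sum_add_distrib,
    Finset.sum_ite_eq' univ j0 (fun j => c • r j)]
  simp [add_assoc]

lemma vset_convex {v : ι → Fin N → ℝ} {r : κ → Fin N → ℝ} {x y : Fin N → ℝ}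
    (hx : x ∈ VSet v r) (hy : y ∈ VSet v r) {t : ℝ} (ht0 : 0 ≤ t) (ht1 : t ≤ 1) :
    t • x + (1 - t) • y ∈ VSet v r := by
  obtain ⟨lam, mu, hlam, hmu, hsum, rfl⟩ := hx
  obtain ⟨lam', mu', hlam', hmu', hsum', rfl⟩ := hy
  refine ⟨fun i => t * lam i + (1 - t) * lam' i, fun j => t * mu j + (1 - t) * mu' j,
    fun i => add_nonneg (mul_nonneg ht0 (hlam i)) (mul_nonneg (by linarith) (hlam' i)),
    fun j => add_nonneg (mul_nonneg ht0 (hmu j)) (mul_nonneg (by linarith) (hmu' j)), ?_, ?_⟩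
  · rw [Finset.sum_add_distrib, ← Finset.mul_sum, ← Finset.mul_sum, hsum, hsum']
    ring
  · rw [smul_add, smul_add, Finset.smul_sum, Finset.smul_sum, Finset.smul_sum, Finset.smul_sum]
    have e1 : ∀ i : ι, (t * lam i + (1 - t) * lam' i) • v i
        = t • lam i • v i + (1 - t) • lam' i • v i := by
      intro i; rw [add_smul, smul_smul, smul_smul]
    have e2 : ∀ j : κ, (t * mu j + (1 - t) * mu' j) • r j
        = t • mu j • r j + (1 - t) • mu' j • r j := by
      intro j; rw [add_smul, smul_smul, smul_smul]
    rw [Finset.sum_congr rfl (fun i _ => e1 i), Finset.sum_congr rfl (fun j _ => e2 j),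
      Finset.sum_add_distrib, Finset.sum_add_distrib]
    abel

lemma dotp_le_on_vset {v : ι → Fin N → ℝ} {r : κ → Fin N → ℝ} {x y : Fin N → ℝ} {M : ℝ}
    (hv : ∀ i, dotp y (v i) ≤ M) (hr : ∀ j, dotp y (r j) ≤ 0)
    (hx : x ∈ VSet v r) : dotp y x ≤ M := by
  obtain ⟨lam, mu, hlam, hmu, hsum, rfl⟩ := hx
  rw [dotp_add_right, dotp_sum_right, dotp_sum_right]
  have h1 : ∑ i, dotp y (lam i • v i) ≤ M := by
    have : ∀ i ∈ univ, dotp y (lam i • v i) ≤ lam i * M := fun i _ => by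
      rw [dotp_smul_right]
      exact mul_le_mul_of_nonneg_left (hv i) (hlam i)
    calc ∑ i, dotp y (lam i • v i) ≤ ∑ i, lam i * M := Finset.sum_le_sum this
      _ = M := by rw [← Finset.sum_mul, hsum, one_mul]
  have h2 : ∑ j, dotp y (mu j • r j) ≤ 0 := Finset.sum_nonpos fun j _ => by
    rw [dotp_smul_right]
    exact mul_nonpos_of_nonneg_of_nonpos (hmu j) (hr j)
  linarith

lemma suppFn_vset_eq (hι : Nonempty ι) (v : ι → Fin N → ℝ) (r : κ → Fin N → ℝ)
    {y : Fin N → ℝ} (hr : ∀ j, dotp y (r j) ≤ 0) :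
    suppFn (VSet v r) y
      = ((univ.sup' (univ_nonempty_iff.2 hι) (fun i => dotp y (v i)) : ℝ) : EReal) := by
  obtain ⟨i0, -, hi0⟩ : ∃ i0 ∈ univ, univ.sup' (univ_nonempty_iff.2 hι)
      (fun i => dotp y (v i)) = dotp y (v i0) := by
    obtain ⟨i0, hmem, heq⟩ := Finset.exists_mem_eq_sup' (univ_nonempty_iff.2 hι)
      (fun i => dotp y (v i))
    exact ⟨i0, hmem, heq⟩
  exact suppFn_eq_coe (vertex_mem_vset v r i0) hi0.symm
    (fun x hx => dotp_le_on_vset (fun i => Finset.le_sup' (fun i => dotp y (v i)) (Finset.mem_univ i)) hr hx)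

lemma suppFn_vset_top (hι : Nonempty ι) (v : ι → Fin N → ℝ) (r : κ → Fin N → ℝ)
    {y : Fin N → ℝ} {j0 : κ} (hj : 0 < dotp y (r j0)) :
    suppFn (VSet v r) y = ⊤ := by
  obtain ⟨i0⟩ := hι
  refine suppFn_eq_top (fun M => ?_)
  obtain ⟨c, hc0, hc⟩ : ∃ c : ℝ, 0 ≤ c ∧ M ≤ dotp y (v i0) + c * dotp y (r j0) := by
    refine ⟨max ((M - dotp y (v i0)) / dotp y (r j0)) 0, le_max_right _ _, ?_⟩
    rcases le_total ((M - dotp y (v i0)) / dotp y (r j0)) 0 with h | h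
    · rw [max_eq_right h]
      have : M - dotp y (v i0) ≤ 0 := by
        by_contra hcon
        push_neg at hcon
        have := div_pos hcon hj
        linarith
      linarith
    · rw [max_eq_left h, div_mul_cancel₀ _ (ne_of_gt hj)]
      linarith
  refine ⟨v i0 + c • r j0, add_ray_mem_vset (vertex_mem_vset v r i0) hc0 j0, ?_⟩
  rw [dotp_add_right, dotp_smul_right]
  exact hc

end VSetFacts
section PolarFacts

open Finset

variable {m : ℕ}

lemma sum_eq_dotp_one (ν : Fin m → ℝ) : ∑ i, ν i = dotp (fun _ => 1) ν := by
  unfold dotp; exact Finset.sum_congr rfl fun i _ => by ring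

/-- Generators of the polar cone `N_β°`. -/
noncomputable def GN (b : Fin m) : ({i : Fin m // i ≠ b} ⊕ Bool) → Fin m → ℝ :=
  Sum.elim (fun i => -(Pi.single i.1 1))
    (fun s => if s then (fun _ => (1:ℝ)) else (fun _ => (-1:ℝ)))

lemma dotp_GN_inl (b : Fin m) (i : {i : Fin m // i ≠ b}) (ν : Fin m → ℝ) :
    dotp (GN b (Sum.inl i)) ν = -(ν i.1) := by
  show dotp (-(Pi.single i.1 1)) ν = _
  rw [dotp_neg_left, dotp_comm, dotp_single, mul_one]

lemma dotp_GN_inr (b : Fin m) (s : Bool) (ν : Fin m → ℝ) :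
    dotp (GN b (Sum.inr s)) ν = (if s then (1:ℝ) else -1) * ∑ i, ν i := by
  show dotp (if s then _ else _) ν = _
  cases s
  · simp only [if_false, Bool.false_eq_true]
    rw [sum_eq_dotp_one]
    show dotp (fun _ => (-1:ℝ)) ν = _
    unfold dotp
    rw [Finset.mul_sum]
    exact Finset.sum_congr rfl fun i _ => by ring
  · simp only [if_true]
    rw [sum_eq_dotp_one]
    unfold dotp
    rw [Finset.mul_sum]
    exact Finset.sum_congr rfl fun i _ => by ring

lemma mem_Nbeta_iff_GN (b : Fin m) (ν : Fin m → ℝ) :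
    ν ∈ Nbeta b ↔ ∀ g, dotp (GN b g) ν ≤ 0 := by
  constructor
  · rintro ⟨h1, h2⟩ g
    rcases g with i | s
    · rw [dotp_GN_inl]
      have := h1 i.1 i.2
      linarith
    · rw [dotp_GN_inr, h2, mul_zero]
  · intro h
    constructor
    · intro i hi
      have := h (Sum.inl ⟨i, hi⟩)
      rw [dotp_GN_inl] at this
      linarith
    · have h1 := h (Sum.inr true)
      have h2 := h (Sum.inr false)
      rw [dotp_GN_inr] at h1 h2
      simp only [if_true, if_false, Bool.false_eq_true, one_mul, neg_one_mul] at h1 h2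
      linarith

lemma single_sub_single_mem_Nbeta (b : Fin m) (i : Fin m) (hi : i ≠ b) :
    (Pi.single i 1 - Pi.single b 1 : Fin m → ℝ) ∈ Nbeta b := by
  constructor
  · intro k hk
    rw [Pi.sub_apply, Pi.single_apply, Pi.single_apply, if_neg hk]
    split_ifs <;> norm_num
  · simp only [Pi.sub_apply]
    rw [Finset.sum_sub_distrib]
    have hs : ∀ l : Fin m, (∑ k, (Pi.single l 1 : Fin m → ℝ) k) = 1 := by
      intro l
      rw [Finset.sum_eq_single l (fun k _ hk => by rw [Pi.single_apply, if_neg hk])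
        (fun h => absurd (Finset.mem_univ l) h)]
      simp
    rw [hs, hs, sub_self]

lemma polarN_eq_cone (b : Fin m) : polarN b = ConeOf (GN b) := by
  classical
  ext w
  constructor
  · intro hw
    have hwb : ∀ i : Fin m, w i ≤ w b := by
      intro i
      rcases eq_or_ne i b with rfl | hi
      · exact le_refl _
      · have h := hw _ (single_sub_single_mem_Nbeta b i hi)
        rw [sub_eq_add_neg, dotp_add_right, dotp_neg_right, dotp_single, dotp_single] at h
        linarith
    refine ⟨Sum.elim (fun i => w b - w i.1)
      (fun s => if s then max (w b) 0 else max (-(w b)) 0), ?_, ?_⟩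
    · intro g
      rcases g with i | s
      · simp only [Sum.elim_inl, sub_nonneg]
        exact hwb i.1
      · simp only [Sum.elim_inr]
        split_ifs <;> positivity
    · have hkey : (∑ i : {i : Fin m // i ≠ b}, (w b - w i.1) • (-(Pi.single i.1 1) : Fin m → ℝ))
          + ((max (w b) 0 • (fun _ => (1:ℝ)) : Fin m → ℝ)
            + (max (-(w b)) 0 • (fun _ => (-1:ℝ)) : Fin m → ℝ)) = w := by
        funext k
        have hmax := max_zero_sub_max_neg_zero_eq_self (w b)
        rw [Pi.add_apply, Pi.add_apply, Finset.sum_apply]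
        have hterm : ∀ i : {i : Fin m // i ≠ b},
            ((w b - w i.1) • (-(Pi.single i.1 1) : Fin m → ℝ)) k
              = (if k = i.1 then -(w b - w i.1) else 0) := by
          intro i
          show (w b - w i.1) * (-((Pi.single i.1 1 : Fin m → ℝ) k)) = _
          rw [Pi.single_apply]
          split_ifs <;> ring
        rw [Finset.sum_congr rfl (fun i _ => hterm i)]
        have hc1 : (max (w b) 0 • (fun _ => (1:ℝ)) : Fin m → ℝ) k = max (w b) 0 := by
          show max (w b) 0 * 1 = _
          ring
        have hc2 : (max (-(w b)) 0 • (fun _ => (-1:ℝ)) : Fin m → ℝ) k = -(max (-(w b)) 0) := by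
          show max (-(w b)) 0 * (-1) = _
          ring
        rw [hc1, hc2]
        rcases eq_or_ne k b with rfl | hk
        · rw [Finset.sum_eq_zero (fun i _ => if_neg (fun h => i.2 h.symm))]
          linarith
        · rw [Finset.sum_eq_single (⟨k, hk⟩ : {i : Fin m // i ≠ b})
            (fun i _ hne => if_neg (fun h => hne (Subtype.ext h.symm)))
            (fun h => absurd (Finset.mem_univ _) h), if_pos rfl]
          linarith
      rw [Fintype.sum_sum_type, Fintype.sum_bool]
      exact hkey.symm
  · rintro ⟨η, hη, rfl⟩
    intro ν hν
    have : dotp (∑ g, η g • GN b g) ν = ∑ g, η g * dotp (GN b g) ν := by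
      rw [dotp_comm, dotp_sum_right]
      exact Finset.sum_congr rfl fun g _ => by rw [dotp_comm, dotp_smul_left]
    rw [this]
    exact Finset.sum_nonpos fun g _ => mul_nonpos_of_nonneg_of_nonpos (hη g)
      ((mem_Nbeta_iff_GN b ν).1 hν g)

end PolarFacts
section PsetFacts

open Finset

variable {n m : ℕ}

/-- `x ↦ -𝒜ᵀx`. -/
noncomputable def Lmap (A : Fin m → Fin n → ℝ) (x : Fin n → ℝ) : Fin m → ℝ :=
  fun i => -(dotp (A i) x)

lemma Lmap_eq_neg (A : Fin m → Fin n → ℝ) (x : Fin n → ℝ) :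
    -(fun i => dotp (A i) x) = Lmap A x := rfl

lemma Lmap_add (A : Fin m → Fin n → ℝ) (x y : Fin n → ℝ) :
    Lmap A (x + y) = Lmap A x + Lmap A y := by
  funext i
  show -(dotp (A i) (x + y)) = -(dotp (A i) x) + -(dotp (A i) y)
  rw [dotp_add_right]
  ring

lemma Lmap_sum {γ : Type} [Fintype γ] (A : Fin m → Fin n → ℝ) (c : γ → ℝ)
    (f : γ → Fin n → ℝ) :
    Lmap A (∑ k, c k • f k) = ∑ k, c k • Lmap A (f k) := by
  funext i
  rw [Finset.sum_apply]
  show -(dotp (A i) (∑ k, c k • f k)) = _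
  rw [dotp_sum_right, ← Finset.sum_neg_distrib]
  refine Finset.sum_congr rfl fun k _ => ?_
  rw [dotp_smul_right]
  show -(c k * dotp (A i) (f k)) = c k * -(dotp (A i) (f k))
  ring

lemma dotp_Lmap (A : Fin m → Fin n → ℝ) (u : Fin m → ℝ) (x : Fin n → ℝ) :
    dotp u (Lmap A x) = dotp (-(Amap A u)) x := by
  unfold dotp
  have h1 : ∀ i, u i * Lmap A x i = -∑ j, u i * (A i j * x j) := by
    intro i
    show u i * -(∑ j, A i j * x j) = _
    rw [mul_neg, Finset.mul_sum]
  have h2 : ∀ j, (-(Amap A u)) j * x j = -∑ i, u i * A i j * x j := by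
    intro j
    show (-(∑ i, u i * A i j)) * x j = _
    rw [neg_mul, Finset.sum_mul]
  rw [Finset.sum_congr rfl (fun i _ => h1 i), Finset.sum_congr rfl (fun j _ => h2 j),
    Finset.sum_neg_distrib, Finset.sum_neg_distrib, neg_inj, Finset.sum_comm]
  exact Finset.sum_congr rfl fun j _ => Finset.sum_congr rfl fun i _ => by ring

theorem pset_vrep {ι κ : Type} [Fintype ι] [Fintype κ] (X : Set (Fin n → ℝ))
    (A : Fin m → Fin n → ℝ) (b : Fin m) (v : ι → Fin n → ℝ) (r : κ → Fin n → ℝ)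
    (hX : X = VSet v r) :
    Pset X A b = VSet (fun i => Lmap A (v i))
      (Sum.elim (fun j => Lmap A (r j)) (GN b)) := by
  classical
  ext p
  constructor
  · rintro ⟨x, hx, w, hw, rfl⟩
    rw [hX] at hx
    obtain ⟨lam, mu, hlam, hmu, hsum, rfl⟩ := hx
    rw [polarN_eq_cone] at hw
    obtain ⟨η, hη, rfl⟩ := hw
    refine ⟨lam, Sum.elim mu η, hlam, ?_, hsum, ?_⟩
    · intro j
      rcases j with j | g
      · exact hmu j
      · exact hη g
    · rw [Lmap_eq_neg, Lmap_add, Lmap_sum, Lmap_sum]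
      conv_rhs => rw [Fintype.sum_sum_type]
      have e0 : (∑ i, lam i • (fun i => Lmap A (v i)) i) = ∑ i, lam i • Lmap A (v i) :=
        Finset.sum_congr rfl fun i _ => rfl
      have e1 : (∑ j : κ, Sum.elim mu η (Sum.inl j) •
          Sum.elim (fun j => Lmap A (r j)) (GN b) (Sum.inl j)) = ∑ j, mu j • Lmap A (r j) :=
        Finset.sum_congr rfl fun j _ => rfl
      have e2 : (∑ g, Sum.elim mu η (Sum.inr g) •
          Sum.elim (fun j => Lmap A (r j)) (GN b) (Sum.inr g)) = ∑ g, η g • GN b g :=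
        Finset.sum_congr rfl fun g _ => rfl
      rw [e0, e1, e2]
      abel
  · rintro ⟨lam, mu', hlam, hmu', hsum, rfl⟩
    refine ⟨∑ i, lam i • v i + ∑ j, mu' (Sum.inl j) • r j, ?_,
      ∑ g, mu' (Sum.inr g) • GN b g, ?_, ?_⟩
    · rw [hX]
      exact ⟨lam, fun j => mu' (Sum.inl j), hlam, fun j => hmu' (Sum.inl j), hsum, rfl⟩
    · rw [polarN_eq_cone]
      exact ⟨fun g => mu' (Sum.inr g), fun g => hmu' (Sum.inr g), rfl⟩
    · rw [Lmap_eq_neg, Lmap_add, Lmap_sum, Lmap_sum]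
      conv_lhs => rw [Fintype.sum_sum_type]
      have e0 : (∑ i, lam i • (fun i => Lmap A (v i)) i) = ∑ i, lam i • Lmap A (v i) :=
        Finset.sum_congr rfl fun i _ => rfl
      have e1 : (∑ j : κ, mu' (Sum.inl j) •
          Sum.elim (fun j => Lmap A (r j)) (GN b) (Sum.inl j)) = ∑ j, mu' (Sum.inl j) • Lmap A (r j) :=
        Finset.sum_congr rfl fun j _ => rfl
      have e2 : (∑ g, mu' (Sum.inr g) •
          Sum.elim (fun j => Lmap A (r j)) (GN b) (Sum.inr g)) = ∑ g, mu' (Sum.inr g) • GN b g :=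
        Finset.sum_congr rfl fun g _ => rfl
      rw [e0, e1, e2]
      abel

end PsetFacts
section SuppFormulas

open Finset

variable {n m : ℕ} {ι0 κ0 : Type} [Fintype ι0] [Fintype κ0]

/-- The max of `⟨u, -𝒜ᵀvᵢ⟩` over the vertices. -/
noncomputable def supV (A : Fin m → Fin n → ℝ) (v : ι0 → Fin n → ℝ) (hι : Nonempty ι0)
    (u : Fin m → ℝ) : ℝ :=
  Finset.univ.sup' (Finset.univ_nonempty_iff.2 hι) (fun i => dotp u (Lmap A (v i)))

lemma dotp_le_supV (A : Fin m → Fin n → ℝ) (v : ι0 → Fin n → ℝ) (hι : Nonempty ι0)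
    (u : Fin m → ℝ) (i : ι0) : dotp u (Lmap A (v i)) ≤ supV A v hι u :=
  Finset.le_sup' (fun i => dotp u (Lmap A (v i))) (Finset.mem_univ i)

lemma exists_supV_vertex (A : Fin m → Fin n → ℝ) (v : ι0 → Fin n → ℝ) (hι : Nonempty ι0)
    (u : Fin m → ℝ) : ∃ i : ι0, dotp u (Lmap A (v i)) = supV A v hι u := by
  obtain ⟨i, -, hi⟩ := Finset.exists_mem_eq_sup' (Finset.univ_nonempty_iff.2 hι)
    (fun i => dotp u (Lmap A (v i)))
  exact ⟨i, hi.symm⟩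

variable {X : Set (Fin n → ℝ)} {A : Fin m → Fin n → ℝ} {b : Fin m}
  {v : ι0 → Fin n → ℝ} {r : κ0 → Fin n → ℝ}

lemma dom_iff (u : Fin m → ℝ) :
    (∀ jj, dotp u (Sum.elim (fun j => Lmap A (r j)) (GN b) jj) ≤ 0)
      ↔ (u ∈ Nbeta b ∧ ∀ j, dotp (-(Amap A u)) (r j) ≤ 0) := by
  constructor
  · intro h
    constructor
    · rw [mem_Nbeta_iff_GN]
      intro g
      have := h (Sum.inr g)
      rw [dotp_comm]
      exact this
    · intro j
      have := h (Sum.inl j)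
      rwa [show Sum.elim (fun j => Lmap A (r j)) (GN b) (Sum.inl j) = Lmap A (r j) from rfl,
        dotp_Lmap] at this
  · rintro ⟨hN, hray⟩ jj
    rcases jj with j | g
    · rw [show Sum.elim (fun j => Lmap A (r j)) (GN b) (Sum.inl j) = Lmap A (r j) from rfl,
        dotp_Lmap]
      exact hray j
    · rw [show Sum.elim (fun j => Lmap A (r j)) (GN b) (Sum.inr g) = GN b g from rfl,
        dotp_comm]
      exact (mem_Nbeta_iff_GN b u).1 hN g

lemma sigA_eq_supV (hX : X = VSet v r) (hι : Nonempty ι0) {u : Fin m → ℝ}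
    (hray : ∀ j, dotp (-(Amap A u)) (r j) ≤ 0) :
    sigA X A u = ((supV A v hι u : ℝ) : EReal) := by
  unfold sigA
  rw [hX, suppFn_vset_eq hι v r hray]
  congr 1
  unfold supV
  refine Finset.sup'_congr _ rfl (fun i _ => ?_)
  rw [← dotp_Lmap]

lemma sigA_eq_top (hX : X = VSet v r) (hι : Nonempty ι0) {u : Fin m → ℝ}
    {j0 : κ0} (hpos : 0 < dotp (-(Amap A u)) (r j0)) : sigA X A u = ⊤ := by
  unfold sigA
  rw [hX]
  exact suppFn_vset_top hι v r hpos

lemma suppFn_pset_eq (hX : X = VSet v r) (hι : Nonempty ι0) {u : Fin m → ℝ}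
    (hdom : ∀ jj, dotp u (Sum.elim (fun j => Lmap A (r j)) (GN b) jj) ≤ 0) :
    suppFn (Pset X A b) u = ((supV A v hι u : ℝ) : EReal) := by
  rw [pset_vrep X A b v r hX]
  exact suppFn_vset_eq hι _ _ hdom

lemma suppFn_pset_top (hX : X = VSet v r) (hι : Nonempty ι0) {u : Fin m → ℝ}
    {jj0 : κ0 ⊕ ({i : Fin m // i ≠ b} ⊕ Bool)}
    (hpos : 0 < dotp u (Sum.elim (fun j => Lmap A (r j)) (GN b) jj0)) :
    suppFn (Pset X A b) u = ⊤ := by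
  rw [pset_vrep X A b v r hX]
  exact suppFn_vset_top hι _ _ hpos

lemma sigA_eq_suppFn_pset (hX : X = VSet v r) (hι : Nonempty ι0) {u : Fin m → ℝ}
    (hN : u ∈ Nbeta b) (hray : ∀ j, dotp (-(Amap A u)) (r j) ≤ 0) :
    sigA X A u = suppFn (Pset X A b) u := by
  rw [sigA_eq_supV hX hι hray, suppFn_pset_eq hX hι ((dom_iff u).2 ⟨hN, hray⟩)]

/-- ε-selection over a finite index type. -/
lemma exists_eps {γ : Type} [Fintype γ] (gap C : γ → ℝ) :
    ∃ ε : ℝ, 0 < ε ∧ ∀ k, 0 < gap k → ε * C k ≤ gap k := by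
  classical
  set s : Finset ℝ := insert 1 ((Finset.univ.filter (fun k => 0 < gap k ∧ 0 < C k)).image
    (fun k => gap k / C k)) with hs
  have hne : s.Nonempty := ⟨1, Finset.mem_insert_self _ _⟩
  refine ⟨s.min' hne, ?_, ?_⟩
  · rcases Finset.mem_insert.1 (s.min'_mem hne) with h | h
    · rw [h]; norm_num
    · obtain ⟨k, hk, hkeq⟩ := Finset.mem_image.1 h
      have := (Finset.mem_filter.1 hk).2
      rw [← hkeq]
      exact div_pos this.1 this.2
  · intro k hgap
    rcases le_or_gt (C k) 0 with hC | hC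
    · have h1 : s.min' hne * C k ≤ 0 := by
        have hpos : 0 < s.min' hne := by
          rcases Finset.mem_insert.1 (s.min'_mem hne) with h | h
          · rw [h]; norm_num
          · obtain ⟨k', hk', hkeq⟩ := Finset.mem_image.1 h
            have := (Finset.mem_filter.1 hk').2
            rw [← hkeq]
            exact div_pos this.1 this.2
        exact mul_nonpos_of_nonneg_of_nonpos (le_of_lt hpos) hC
      linarith
    · have hmem : gap k / C k ∈ s := Finset.mem_insert_of_mem
        (Finset.mem_image.2 ⟨k, Finset.mem_filter.2 ⟨Finset.mem_univ k, hgap, hC⟩, rfl⟩)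
      have hle := Finset.min'_le s _ hmem
      calc s.min' hne * C k ≤ (gap k / C k) * C k :=
            mul_le_mul_of_nonneg_right hle (le_of_lt hC)
        _ = gap k := by field_simp

end SuppFormulas
section ForwardLemma

open Finset

variable {n m : ℕ} {ι0 κ0 : Type} [Fintype ι0] [Fintype κ0]
variable {X : Set (Fin n → ℝ)} {A : Fin m → Fin n → ℝ} {b : Fin m}
  {v : ι0 → Fin n → ℝ} {r : κ0 → Fin n → ℝ}

theorem circuit_normal_cone (hX : X = VSet v r) (hι : Nonempty ι0) {ν : Fin m → ℝ}
    (hcirc : IsXCircuit X A b ν) :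
    IsFaceOf (Pset X A b) {z | z ∈ Pset X A b ∧ dotp z ν = supV A v hι ν} ∧
    {w : Fin m → ℝ | ∀ z ∈ {z | z ∈ Pset X A b ∧ dotp z ν = supV A v hι ν},
        ((dotp z w : ℝ) : EReal) = suppFn (Pset X A b) w}
      = {w : Fin m → ℝ | ∃ t : ℝ, 0 ≤ t ∧ w = t • ν} := by
  classical
  obtain ⟨hNb, hne0, hfin, hnodec⟩ := hcirc
  obtain ⟨s, hs⟩ : ∃ s : ℝ, supV A v hι ν = s := ⟨_, rfl⟩
  have hrayν : ∀ j, dotp (-(Amap A ν)) (r j) ≤ 0 := by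
    intro j
    by_contra hc
    push_neg at hc
    rw [sigA_eq_top hX hι hc] at hfin
    exact absurd hfin (lt_irrefl ⊤)
  have hdomν : ∀ jj, dotp ν (Sum.elim (fun j => Lmap A (r j)) (GN b) jj) ≤ 0 :=
    (dom_iff ν).2 ⟨hNb, hrayν⟩
  have hP : Pset X A b
      = VSet (fun i => Lmap A (v i)) (Sum.elim (fun j => Lmap A (r j)) (GN b)) :=
    pset_vrep X A b v r hX
  have hsup : suppFn (Pset X A b) ν = (s : EReal) := by
    rw [suppFn_pset_eq hX hι hdomν, hs]
  have hub : ∀ p ∈ Pset X A b, dotp ν p ≤ s := by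
    intro p hp
    rw [hP] at hp
    rw [← hs]
    exact dotp_le_on_vset (fun i => dotp_le_supV A v hι ν i) hdomν hp
  have hub' : ∀ p ∈ Pset X A b, dotp p ν ≤ s := by
    intro p hp
    rw [dotp_comm]
    exact hub p hp
  obtain ⟨istar, histar⟩ := exists_supV_vertex A v hι ν
  rw [hs] at histar
  have hz0P : Lmap A (v istar) ∈ Pset X A b := by
    rw [hP]
    exact vertex_mem_vset _ _ istar
  have hz0V : Lmap A (v istar)
      ∈ VSet (fun i => Lmap A (v i)) (Sum.elim (fun j => Lmap A (r j)) (GN b)) := by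
    rw [← hP]
    exact hz0P
  have hz0F : Lmap A (v istar) ∈ {z | z ∈ Pset X A b ∧ dotp z ν = supV A v hι ν} := by
    refine ⟨hz0P, ?_⟩
    rw [hs, dotp_comm]
    exact histar
  constructor
  · refine ⟨fun z hz => hz.1, ?_, ?_⟩
    · intro z1 hz1 z2 hz2 a c ha hc hac
      have hc' : c = 1 - a := by linarith
      refine ⟨?_, ?_⟩
      · rw [hP]
        have hz1V := hz1.1
        have hz2V := hz2.1
        rw [hP] at hz1V hz2V
        rw [hc']
        exact vset_convex hz1V hz2V ha (by linarith)
      · rw [hs, dotp_add_left, dotp_smul_left, dotp_smul_left]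
        have e1 := hz1.2
        have e2 := hz2.2
        rw [hs] at e1 e2
        rw [e1, e2]
        calc a * s + c * s = (a + c) * s := by ring
          _ = s := by rw [hac, one_mul]
    · intro p hp q hq t ht hmem
      have h1 := hub' p hp
      have h2 := hub' q hq
      have h3 : dotp (t • p + (1 - t) • q) ν = s := by
        have := hmem.2
        rw [hs] at this
        exact this
      rw [dotp_add_left, dotp_smul_left, dotp_smul_left] at h3
      obtain ⟨ht0, ht1⟩ := ht
      have hps : dotp p ν = s := by
        nlinarith [mul_nonneg (le_of_lt ht0) (sub_nonneg.2 h1),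
          mul_nonneg (by linarith : (0:ℝ) ≤ 1 - t) (sub_nonneg.2 h2)]
      have hqs : dotp q ν = s := by
        nlinarith [mul_nonneg (le_of_lt ht0) (sub_nonneg.2 h1),
          mul_nonneg (by linarith : (0:ℝ) ≤ 1 - t) (sub_nonneg.2 h2)]
      exact ⟨⟨hp, by rw [hs]; exact hps⟩, ⟨hq, by rw [hs]; exact hqs⟩⟩
  · ext w
    simp only [Set.mem_setOf_eq]
    constructor
    · intro hw
      have hσw0 := hw _ hz0F
      obtain ⟨σw, hσwdef⟩ : ∃ σw : ℝ, dotp (Lmap A (v istar)) w = σw := ⟨_, rfl⟩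
      have hsupw : suppFn (Pset X A b) w = (σw : EReal) := by
        rw [← hσw0, hσwdef]
      have hdomw : ∀ jj, dotp w (Sum.elim (fun j => Lmap A (r j)) (GN b) jj) ≤ 0 := by
        intro jj
        by_contra hc
        push_neg at hc
        rw [suppFn_pset_top hX hι hc] at hsupw
        exact absurd hsupw (by simp)
      have hwNb : w ∈ Nbeta b := ((dom_iff w).1 hdomw).1
      have hwub : ∀ p ∈ Pset X A b, dotp w p ≤ σw := by
        intro p hp
        have h := coe_le_suppFn (y := w) hp
        rw [hsupw] at h
        exact EReal.coe_le_coe_iff.1 h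
      have htightv : ∀ i : ι0, dotp ν (Lmap A (v i)) = s → dotp w (Lmap A (v i)) = σw := by
        intro i hi
        have hmem : Lmap A (v i) ∈ Pset X A b := by
          rw [hP]
          exact vertex_mem_vset _ _ i
        have hF : Lmap A (v i) ∈ {z | z ∈ Pset X A b ∧ dotp z ν = supV A v hι ν} := by
          refine ⟨hmem, ?_⟩
          rw [hs, dotp_comm]
          exact hi
        have h := hw _ hF
        rw [hsupw] at h
        rw [dotp_comm]
        exact EReal.coe_eq_coe_iff.1 h
      have htightr : ∀ jj, dotp ν (Sum.elim (fun j => Lmap A (r j)) (GN b) jj) = 0 →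
          dotp w (Sum.elim (fun j => Lmap A (r j)) (GN b) jj) = 0 := by
        intro jj h0
        have hmem' : Lmap A (v istar) + (1:ℝ) • (Sum.elim (fun j => Lmap A (r j)) (GN b) jj)
            ∈ VSet (fun i => Lmap A (v i)) (Sum.elim (fun j => Lmap A (r j)) (GN b)) :=
          add_ray_mem_vset hz0V zero_le_one jj
        rw [one_smul] at hmem'
        have hmem : Lmap A (v istar) + Sum.elim (fun j => Lmap A (r j)) (GN b) jj
            ∈ Pset X A b := by
          rw [hP]
          exact hmem'
        have hF : Lmap A (v istar) + Sum.elim (fun j => Lmap A (r j)) (GN b) jj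
            ∈ {z | z ∈ Pset X A b ∧ dotp z ν = supV A v hι ν} := by
          refine ⟨hmem, ?_⟩
          rw [hs, dotp_add_left, dotp_comm, histar, dotp_comm, h0, add_zero]
        have h := hw _ hF
        rw [hsupw] at h
        have h' := EReal.coe_eq_coe_iff.1 h
        rw [dotp_add_left, hσwdef] at h'
        rw [dotp_comm]
        linarith
      by_cases hprop : Proportional w ν
      · obtain ⟨t, ht⟩ := hprop
        have hcex : ∃ c : ℝ, w = c • ν := by
          rcases ht with h | h
          · exact ⟨t, h⟩
          · have htne : t ≠ 0 := by
              rintro rfl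
              rw [zero_smul] at h
              exact hne0 h
            refine ⟨t⁻¹, ?_⟩
            rw [h, smul_smul, inv_mul_cancel₀ htne, one_smul]
        obtain ⟨c, rfl⟩ := hcex
        refine ⟨c, ?_, rfl⟩
        by_contra hc0
        push_neg at hc0
        have hcoord : ∀ i, i ≠ b → ν i = 0 := by
          intro i hib
          have h1 := hNb.1 i hib
          have h2 := hwNb.1 i hib
          have h3 : (c • ν) i = c * ν i := rfl
          rw [h3] at h2
          nlinarith
        have hb0 : ν b = 0 := by
          have hsum := hNb.2
          rw [Finset.sum_eq_single b (fun i _ hib => hcoord i hib)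
            (fun h => absurd (Finset.mem_univ b) h)] at hsum
          exact hsum
        refine hne0 (funext fun i => ?_)
        rcases eq_or_ne i b with rfl | h
        · exact hb0
        · exact hcoord i h
      · exfalso
        obtain ⟨ε, hε0, hεle⟩ := exists_eps
          (Sum.elim (fun i : ι0 => s - dotp ν (Lmap A (v i)))
            (fun jj => -(dotp ν (Sum.elim (fun j => Lmap A (r j)) (GN b) jj))))
          (Sum.elim (fun i : ι0 => σw - dotp w (Lmap A (v i)))
            (fun jj => -(dotp w (Sum.elim (fun j => Lmap A (r j)) (GN b) jj))))
        have hdotν2 : ∀ y : Fin m → ℝ,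
            dotp ((1 + ε) • ν - ε • w) y = (1+ε) * dotp ν y - ε * dotp w y := by
          intro y
          rw [sub_eq_add_neg, dotp_add_left, dotp_smul_left, dotp_neg_left, dotp_smul_left]
          ring
        have hν2rays : ∀ jj, dotp ((1 + ε) • ν - ε • w)
            (Sum.elim (fun j => Lmap A (r j)) (GN b) jj) ≤ 0 := by
          intro jj
          rw [hdotν2]
          rcases eq_or_lt_of_le (hdomν jj) with h0 | hlt
          · have htw := htightr jj h0
            rw [h0, htw]
            norm_num
          · have hgap := hεle (Sum.inr jj) (by
              simp only [Sum.elim_inr]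
              linarith)
            simp only [Sum.elim_inr] at hgap
            nlinarith [mul_pos hε0 (show (0:ℝ) <
              -(dotp ν (Sum.elim (fun j => Lmap A (r j)) (GN b) jj)) by linarith)]
        have hν2Nb : ((1 + ε) • ν - ε • w) ∈ Nbeta b :=
          ((dom_iff _).1 hν2rays).1
        have hν2v : ∀ i, dotp ((1 + ε) • ν - ε • w) (Lmap A (v i))
            ≤ (1+ε) * s - ε * σw := by
          intro i
          rw [hdotν2]
          have hle : dotp ν (Lmap A (v i)) ≤ s := by
            rw [← hs]
            exact dotp_le_supV A v hι ν i
          rcases eq_or_lt_of_le hle with h0 | hlt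
          · have htw := htightv i h0
            rw [h0, htw]
          · have hwle : dotp w (Lmap A (v i)) ≤ σw := by
              have : Lmap A (v i) ∈ Pset X A b := by
                rw [hP]
                exact vertex_mem_vset _ _ i
              exact hwub _ this
            have hgap := hεle (Sum.inl i) (by
              simp only [Sum.elim_inl]
              linarith)
            simp only [Sum.elim_inl] at hgap
            nlinarith [mul_pos hε0 (show (0:ℝ) < s - dotp ν (Lmap A (v i)) by linarith)]
        have hν2z0 : dotp ((1 + ε) • ν - ε • w) (Lmap A (v istar)) = (1+ε) * s - ε * σw := by
          rw [hdotν2, histar, dotp_comm, hσwdef]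
        have hsuppν2 : suppFn (Pset X A b) ((1 + ε) • ν - ε • w)
            = (((1+ε) * s - ε * σw : ℝ) : EReal) := by
          rw [hP]
          exact suppFn_eq_coe (vertex_mem_vset _ _ istar) hν2z0
            (fun x hx => dotp_le_on_vset hν2v hν2rays hx)
        have hν2raysX : ∀ j, dotp (-(Amap A ((1 + ε) • ν - ε • w))) (r j) ≤ 0 :=
          ((dom_iff _).1 hν2rays).2
        have hsigν2 : sigA X A ((1 + ε) • ν - ε • w) = (((1+ε) * s - ε * σw : ℝ) : EReal) := by
          rw [sigA_eq_suppFn_pset hX hι hν2Nb hν2raysX, hsuppν2]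
        have hwraysX : ∀ j, dotp (-(Amap A w)) (r j) ≤ 0 := ((dom_iff w).1 hdomw).2
        have hsigw : sigA X A w = (σw : EReal) := by
          rw [sigA_eq_suppFn_pset hX hι hwNb hwraysX, hsupw]
        have haff : SigmaAffineOnSeg X A w ((1 + ε) • ν - ε • w) := by
          rintro t ⟨ht0, ht1⟩
          have hdotut : ∀ y, dotp (t • w + (1 - t) • ((1 + ε) • ν - ε • w)) y
              = t * dotp w y + (1-t) * dotp ((1 + ε) • ν - ε • w) y := by
            intro y
            rw [dotp_add_left, dotp_smul_left, dotp_smul_left]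
          have hutrays : ∀ jj, dotp (t • w + (1 - t) • ((1 + ε) • ν - ε • w))
              (Sum.elim (fun j => Lmap A (r j)) (GN b) jj) ≤ 0 := by
            intro jj
            rw [hdotut]
            nlinarith [mul_nonneg ht0 (neg_nonneg.2 (hdomw jj)),
              mul_nonneg (by linarith : (0:ℝ) ≤ 1 - t) (neg_nonneg.2 (hν2rays jj))]
          have hsigut : sigA X A (t • w + (1 - t) • ((1 + ε) • ν - ε • w))
              = ((supV A v hι (t • w + (1 - t) • ((1 + ε) • ν - ε • w)) : ℝ) : EReal) :=
            sigA_eq_supV hX hι ((dom_iff _).1 hutrays).2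
          have hsupVut : supV A v hι (t • w + (1 - t) • ((1 + ε) • ν - ε • w))
              = t * σw + (1-t) * ((1+ε)*s - ε*σw) := by
            apply le_antisymm
            · apply Finset.sup'_le
              intro i _
              rw [hdotut]
              have h1 : dotp w (Lmap A (v i)) ≤ σw := by
                have : Lmap A (v i) ∈ Pset X A b := by
                  rw [hP]
                  exact vertex_mem_vset _ _ i
                exact hwub _ this
              have h2 := hν2v i
              nlinarith [mul_nonneg ht0 (sub_nonneg.2 h1),
                mul_nonneg (by linarith : (0:ℝ) ≤ 1 - t) (sub_nonneg.2 h2)]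
            · have hle := Finset.le_sup'
                (fun i => dotp (t • w + (1 - t) • ((1 + ε) • ν - ε • w)) (Lmap A (v i)))
                (Finset.mem_univ istar)
              calc t * σw + (1-t) * ((1+ε)*s - ε*σw)
                  = dotp (t • w + (1 - t) • ((1 + ε) • ν - ε • w)) (Lmap A (v istar)) := by
                    rw [hdotut, hν2z0, dotp_comm, hσwdef]
                _ ≤ _ := hle
          rw [hsigut, hsupVut, hsigw, hsigν2]
          norm_cast
        have hθeq : ν = (ε/(1+ε)) • w + (1 - ε/(1+ε)) • ((1 + ε) • ν - ε • w) := by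
          have h1ε : (1:ℝ) + ε ≠ 0 := by positivity
          funext i
          rw [Pi.add_apply, Pi.smul_apply, Pi.smul_apply, Pi.sub_apply, Pi.smul_apply,
            Pi.smul_apply]
          show ν i = (ε/(1+ε)) * w i + (1 - ε/(1+ε)) * ((1+ε) * ν i - ε * w i)
          field_simp
          try ring
        have hnp2 : ¬ Proportional w ((1 + ε) • ν - ε • w) := by
          rintro ⟨t, h | h⟩
          · rw [smul_sub, smul_smul, smul_smul] at h
            have hkey : (1 + t*ε) • w = (t*(1+ε)) • ν := by
              have h2 := congrArg (fun z => z + (t*ε) • w) h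
              simp only [sub_add_cancel] at h2
              rw [add_smul, one_smul]
              exact h2
            rcases eq_or_ne (1 + t*ε) 0 with h0 | h0
            · rw [h0, zero_smul] at hkey
              have htne : t ≠ 0 := by
                rintro rfl
                norm_num at h0
              have hcoef : t * (1+ε) ≠ 0 := mul_ne_zero htne (by positivity)
              have h3 := congrArg (fun z => (t*(1+ε))⁻¹ • z) hkey.symm
              simp only [smul_smul, inv_mul_cancel₀ hcoef, one_smul, smul_zero] at h3
              exact hne0 h3
            · apply hprop
              refine ⟨(1 + t*ε)⁻¹ * (t*(1+ε)), Or.inl ?_⟩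
              have h3 := congrArg (fun z => (1 + t*ε)⁻¹ • z) hkey
              simp only [smul_smul, inv_mul_cancel₀ h0, one_smul] at h3
              rw [← smul_smul] at h3
              exact h3.trans (by rw [smul_smul])
          · apply hprop
            have hkey : (1+ε) • ν = (t + ε) • w := by
              have h2 := congrArg (fun z => z + ε • w) h
              simp only [sub_add_cancel] at h2
              rw [h2, add_smul]
            have h1ε : (1:ℝ) + ε ≠ 0 := by positivity
            refine ⟨(1+ε)⁻¹ * (t+ε), Or.inr ?_⟩
            have h3 := congrArg (fun z => (1+ε)⁻¹ • z) hkey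
            simp only [smul_smul, inv_mul_cancel₀ h1ε, one_smul] at h3
            rw [← smul_smul] at h3
            exact h3.trans (by rw [smul_smul])
        refine hnodec ⟨w, (1 + ε) • ν - ε • w, ε/(1+ε), hwNb, hν2Nb, hnp2, ⟨?_, ?_⟩,
          hθeq, haff⟩
        · positivity
        · rw [div_lt_one (by positivity)]
          linarith
    · rintro ⟨t, ht0, rfl⟩ z hz
      have hsupt : suppFn (Pset X A b) (t • ν) = ((t * s : ℝ) : EReal) := by
        refine suppFn_eq_coe hz0P ?_ ?_
        · rw [dotp_smul_left, histar]
        · intro x hx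
          rw [dotp_smul_left]
          exact mul_le_mul_of_nonneg_left (hub x hx) ht0
      rw [hsupt]
      have : dotp z (t • ν) = t * s := by
        rw [dotp_smul_right]
        have := hz.2
        rw [hs] at this
        rw [this]
      rw [this]

end ForwardLemma
section BackwardLemma

open Finset

variable {n m : ℕ} {ι0 κ0 : Type} [Fintype ι0] [Fintype κ0]
variable {X : Set (Fin n → ℝ)} {A : Fin m → Fin n → ℝ} {b : Fin m}
  {v : ι0 → Fin n → ℝ} {r : κ0 → Fin n → ℝ}

lemma coe_nonneg_mul_ne_bot {c : ℝ} (hc : 0 ≤ c) {x : EReal} (hx : x ≠ ⊥) :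
    (c : EReal) * x ≠ ⊥ := by
  induction x using EReal.rec with
  | bot => exact absurd rfl hx
  | coe y => rw [← EReal.coe_mul]; exact EReal.coe_ne_bot _
  | top =>
    rcases eq_or_lt_of_le hc with rfl | hpos
    · simp
    · rw [EReal.mul_top_of_pos (by exact_mod_cast hpos)]
      simp

theorem face_to_circuit (hX : X = VSet v r) (hι : Nonempty ι0) {ν : Fin m → ℝ}
    (hNb : ν ∈ Nbeta b) (hne0 : ν ≠ 0) {F : Set (Fin m → ℝ)}
    (hface : IsFaceOf (Pset X A b) F)
    (hNC : {w : Fin m → ℝ | ∀ z ∈ F, ((dotp z w : ℝ) : EReal) = suppFn (Pset X A b) w}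
      = {w : Fin m → ℝ | ∃ t : ℝ, 0 ≤ t ∧ w = t • ν}) :
    IsXCircuit X A b ν := by
  classical
  have hXne : X.Nonempty := ⟨v (Classical.choice hι), by rw [hX]; exact vertex_mem_vset _ _ _⟩
  have hP : Pset X A b
      = VSet (fun i => Lmap A (v i)) (Sum.elim (fun j => Lmap A (r j)) (GN b)) :=
    pset_vrep X A b v r hX
  have hFne : F.Nonempty := by
    by_contra hF
    rw [Set.not_nonempty_iff_eq_empty] at hF
    have hmem : -ν ∈ {w : Fin m → ℝ | ∀ z ∈ F,
        ((dotp z w : ℝ) : EReal) = suppFn (Pset X A b) w} := by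
      intro z hz
      rw [hF] at hz
      exact absurd hz (Set.notMem_empty z)
    rw [hNC] at hmem
    obtain ⟨t, ht0, ht⟩ := hmem
    have hzero : (t + 1) • ν = 0 := by
      rw [add_smul, one_smul, ← ht]
      abel
    have htne : t + 1 ≠ 0 := by linarith
    have hν0 := congrArg (fun z => (t+1)⁻¹ • z) hzero
    simp only [smul_smul, inv_mul_cancel₀ htne, one_smul, smul_zero] at hν0
    exact hne0 hν0
  obtain ⟨z0, hz0F⟩ := hFne
  have hz0P : z0 ∈ Pset X A b := hface.1 hz0F
  have hνN : ν ∈ {w : Fin m → ℝ | ∀ z ∈ F,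
      ((dotp z w : ℝ) : EReal) = suppFn (Pset X A b) w} := by
    rw [hNC]
    exact ⟨1, zero_le_one, (one_smul ℝ ν).symm⟩
  have hsupν : suppFn (Pset X A b) ν = ((dotp z0 ν : ℝ) : EReal) := (hνN z0 hz0F).symm
  have hdomν : ∀ jj, dotp ν (Sum.elim (fun j => Lmap A (r j)) (GN b) jj) ≤ 0 := by
    intro jj
    by_contra hc
    push_neg at hc
    rw [suppFn_pset_top hX hι hc] at hsupν
    exact absurd hsupν (by simp)
  have hraysν := ((dom_iff ν).1 hdomν).2
  have hsig : sigA X A ν = ((supV A v hι ν : ℝ) : EReal) := sigA_eq_supV hX hι hraysν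
  have hsupP : suppFn (Pset X A b) ν = ((supV A v hι ν : ℝ) : EReal) :=
    suppFn_pset_eq hX hι hdomν
  refine ⟨hNb, hne0, ?_, ?_⟩
  · rw [hsig]
    exact EReal.coe_lt_top _
  · rintro ⟨ν1, ν2, θ, h1N, h2N, hnp, ⟨hθ0, hθ1⟩, hdec, haff⟩
    have haffθ := haff θ ⟨le_of_lt hθ0, le_of_lt hθ1⟩
    rw [← hdec] at haffθ
    have hfinν : sigA X A ν < ⊤ := by
      rw [hsig]
      exact EReal.coe_lt_top _
    have hbot1 : sigA X A ν1 ≠ ⊥ := suppFn_ne_bot hXne _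
    have hbot2 : sigA X A ν2 ≠ ⊥ := suppFn_ne_bot hXne _
    have htop1 : sigA X A ν1 ≠ ⊤ := by
      intro htop
      rw [htop, EReal.mul_top_of_pos (by exact_mod_cast hθ0),
        EReal.top_add_of_ne_bot (coe_nonneg_mul_ne_bot (by linarith) hbot2)] at haffθ
      rw [haffθ] at hfinν
      exact absurd hfinν (lt_irrefl ⊤)
    have htop2 : sigA X A ν2 ≠ ⊤ := by
      intro htop
      rw [htop, EReal.mul_top_of_pos (by exact_mod_cast (by linarith : (0:ℝ) < 1 - θ)),
        EReal.add_top_of_ne_bot (coe_nonneg_mul_ne_bot (le_of_lt hθ0) hbot1)] at haffθ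
      rw [haffθ] at hfinν
      exact absurd hfinν (lt_irrefl ⊤)
    have hrays1 : ∀ j, dotp (-(Amap A ν1)) (r j) ≤ 0 := by
      intro j
      by_contra hc
      push_neg at hc
      exact htop1 (sigA_eq_top hX hι hc)
    have hrays2 : ∀ j, dotp (-(Amap A ν2)) (r j) ≤ 0 := by
      intro j
      by_contra hc
      push_neg at hc
      exact htop2 (sigA_eq_top hX hι hc)
    have hsig1 : sigA X A ν1 = ((supV A v hι ν1 : ℝ) : EReal) := sigA_eq_supV hX hι hrays1
    have hsig2 : sigA X A ν2 = ((supV A v hι ν2 : ℝ) : EReal) := sigA_eq_supV hX hι hrays2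
    have hsup1 : suppFn (Pset X A b) ν1 = ((supV A v hι ν1 : ℝ) : EReal) :=
      suppFn_pset_eq hX hι ((dom_iff ν1).2 ⟨h1N, hrays1⟩)
    have hsup2 : suppFn (Pset X A b) ν2 = ((supV A v hι ν2 : ℝ) : EReal) :=
      suppFn_pset_eq hX hι ((dom_iff ν2).2 ⟨h2N, hrays2⟩)
    have hreal : supV A v hι ν = θ * supV A v hι ν1 + (1-θ) * supV A v hι ν2 := by
      rw [hsig, hsig1, hsig2, ← EReal.coe_mul, ← EReal.coe_mul, ← EReal.coe_add] at haffθ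
      exact EReal.coe_eq_coe_iff.1 haffθ
    have hkey : ∀ z ∈ F, dotp z ν1 = supV A v hι ν1 ∧ dotp z ν2 = supV A v hι ν2 := by
      intro z hzF
      have hzP := hface.1 hzF
      have hzV : z ∈ VSet (fun i => Lmap A (v i))
          (Sum.elim (fun j => Lmap A (r j)) (GN b)) := by
        rw [← hP]
        exact hzP
      have hb1 : dotp z ν1 ≤ supV A v hι ν1 := by
        rw [dotp_comm]
        exact dotp_le_on_vset (fun i => dotp_le_supV A v hι ν1 i)
          ((dom_iff ν1).2 ⟨h1N, hrays1⟩) hzV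
      have hb2 : dotp z ν2 ≤ supV A v hι ν2 := by
        rw [dotp_comm]
        exact dotp_le_on_vset (fun i => dotp_le_supV A v hι ν2 i)
          ((dom_iff ν2).2 ⟨h2N, hrays2⟩) hzV
      have hzν : dotp z ν = supV A v hι ν := by
        have h := hνN z hzF
        rw [hsupP] at h
        exact EReal.coe_eq_coe_iff.1 h
      have hlin : dotp z ν = θ * dotp z ν1 + (1-θ) * dotp z ν2 := by
        rw [hdec, dotp_add_right, dotp_smul_right, dotp_smul_right]
      constructor
      · nlinarith [mul_nonneg (le_of_lt hθ0) (sub_nonneg.2 hb1),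
          mul_nonneg (by linarith : (0:ℝ) ≤ 1 - θ) (sub_nonneg.2 hb2)]
      · nlinarith [mul_nonneg (le_of_lt hθ0) (sub_nonneg.2 hb1),
          mul_nonneg (by linarith : (0:ℝ) ≤ 1 - θ) (sub_nonneg.2 hb2)]
    have h1ray : ∃ t : ℝ, 0 ≤ t ∧ ν1 = t • ν := by
      have hmem : ν1 ∈ {w : Fin m → ℝ | ∀ z ∈ F,
          ((dotp z w : ℝ) : EReal) = suppFn (Pset X A b) w} := by
        intro z hzF
        rw [hsup1, (hkey z hzF).1]
      rw [hNC] at hmem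
      exact hmem
    have h2ray : ∃ t : ℝ, 0 ≤ t ∧ ν2 = t • ν := by
      have hmem : ν2 ∈ {w : Fin m → ℝ | ∀ z ∈ F,
          ((dotp z w : ℝ) : EReal) = suppFn (Pset X A b) w} := by
        intro z hzF
        rw [hsup2, (hkey z hzF).2]
      rw [hNC] at hmem
      exact hmem
    obtain ⟨t1, ht10, ht1⟩ := h1ray
    obtain ⟨t2, ht20, ht2⟩ := h2ray
    apply hnp
    rcases eq_or_ne t2 0 with rfl | ht2ne
    · refine ⟨0, Or.inr ?_⟩
      rw [ht2, zero_smul, zero_smul]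
    · refine ⟨t1 * t2⁻¹, Or.inl ?_⟩
      rw [ht1, ht2, smul_smul, mul_assoc, inv_mul_cancel₀ ht2ne, mul_one]

end BackwardLemma
section Finiteness

open Finset

variable {n m : ℕ} {ι0 κ0 : Type} [Fintype ι0] [Fintype κ0]
variable {X : Set (Fin n → ℝ)} {A : Fin m → Fin n → ℝ}
  {v : ι0 → Fin n → ℝ} {r : κ0 → Fin n → ℝ}

theorem lambdaB_finite (hX : X = VSet v r) (hι : Nonempty ι0) (b : Fin m) :
    (LambdaB X A b).Finite := by
  classical
  have hP : Pset X A b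
      = VSet (fun i => Lmap A (v i)) (Sum.elim (fun j => Lmap A (r j)) (GN b)) :=
    pset_vrep X A b v r hX
  set T : (Fin m → ℝ) → Finset ι0 × Finset (κ0 ⊕ ({i : Fin m // i ≠ b} ⊕ Bool)) :=
    fun l => (Finset.univ.filter (fun i => dotp l (Lmap A (v i)) = supV A v hι l),
      Finset.univ.filter
        (fun jj => dotp l (Sum.elim (fun j => Lmap A (r j)) (GN b) jj) = 0)) with hT
  refine Set.Finite.of_finite_image (Set.toFinite _) (f := T) ?_
  intro l hl l' hl' hTeq
  obtain ⟨hcirc, hnorm⟩ := hl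
  obtain ⟨hcirc', hnorm'⟩ := hl'
  obtain ⟨hface, hNC⟩ := circuit_normal_cone hX hι hcirc
  -- rays conditions for l and l'
  have hrays : ∀ j, dotp (-(Amap A l)) (r j) ≤ 0 := by
    intro j
    by_contra hc
    push_neg at hc
    have hfin := hcirc.2.2.1
    rw [sigA_eq_top hX hι hc] at hfin
    exact absurd hfin (lt_irrefl ⊤)
  have hrays' : ∀ j, dotp (-(Amap A l')) (r j) ≤ 0 := by
    intro j
    by_contra hc
    push_neg at hc
    have hfin := hcirc'.2.2.1
    rw [sigA_eq_top hX hι hc] at hfin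
    exact absurd hfin (lt_irrefl ⊤)
  have hdom : ∀ jj, dotp l (Sum.elim (fun j => Lmap A (r j)) (GN b) jj) ≤ 0 :=
    (dom_iff l).2 ⟨hcirc.1, hrays⟩
  have hdom' : ∀ jj, dotp l' (Sum.elim (fun j => Lmap A (r j)) (GN b) jj) ≤ 0 :=
    (dom_iff l').2 ⟨hcirc'.1, hrays'⟩
  have hsupP' : suppFn (Pset X A b) l' = ((supV A v hι l' : ℝ) : EReal) :=
    suppFn_pset_eq hX hι hdom'
  -- l' belongs to the normal cone of the face of l
  have hmem : l' ∈ {w : Fin m → ℝ | ∀ z ∈ {z | z ∈ Pset X A b ∧ dotp z l = supV A v hι l},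
      ((dotp z w : ℝ) : EReal) = suppFn (Pset X A b) w} := by
    intro z hz
    obtain ⟨hzP, hzl⟩ := hz
    have hzV : z ∈ VSet (fun i => Lmap A (v i))
        (Sum.elim (fun j => Lmap A (r j)) (GN b)) := by
      rw [← hP]
      exact hzP
    obtain ⟨lam, mu, hlam, hmu, hsum, rfl⟩ := hzV
    -- expand dotp z l
    have hexp : ∀ u : Fin m → ℝ,
        dotp (∑ i, lam i • Lmap A (v i)
          + ∑ jj, mu jj • Sum.elim (fun j => Lmap A (r j)) (GN b) jj) u
        = (∑ i, lam i * dotp u (Lmap A (v i)))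
          + ∑ jj, mu jj * dotp u (Sum.elim (fun j => Lmap A (r j)) (GN b) jj) := by
      intro u
      rw [dotp_comm, dotp_add_right, dotp_sum_right, dotp_sum_right]
      congr 1
      · exact Finset.sum_congr rfl fun i _ => by rw [dotp_smul_right]
      · exact Finset.sum_congr rfl fun jj _ => by rw [dotp_smul_right]
    have hzl' := hzl
    rw [hexp l] at hzl'
    -- the two defect sums are zero
    have hdef : (∑ i, lam i * (supV A v hι l - dotp l (Lmap A (v i))))
        + ∑ jj, mu jj * (-(dotp l (Sum.elim (fun j => Lmap A (r j)) (GN b) jj))) = 0 := by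
      have hexpand : (∑ i, lam i * (supV A v hι l - dotp l (Lmap A (v i))))
          = supV A v hι l - ∑ i, lam i * dotp l (Lmap A (v i)) := by
        rw [Finset.sum_congr rfl (fun i (_ : i ∈ univ) =>
          (mul_sub (lam i) (supV A v hι l) (dotp l (Lmap A (v i)))))]
        rw [Finset.sum_sub_distrib, ← Finset.sum_mul, hsum, one_mul]
      have hexpand2 : (∑ jj, mu jj * (-(dotp l (Sum.elim (fun j => Lmap A (r j)) (GN b) jj))))
          = -∑ jj, mu jj * dotp l (Sum.elim (fun j => Lmap A (r j)) (GN b) jj) := by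
        rw [← Finset.sum_neg_distrib]
        exact Finset.sum_congr rfl fun jj _ => by ring
      rw [hexpand, hexpand2]
      linarith [hzl']
    have hnn1 : ∀ i ∈ univ, 0 ≤ lam i * (supV A v hι l - dotp l (Lmap A (v i))) :=
      fun i _ => mul_nonneg (hlam i) (sub_nonneg.2 (dotp_le_supV A v hι l i))
    have hnn2 : ∀ jj ∈ univ,
        0 ≤ mu jj * (-(dotp l (Sum.elim (fun j => Lmap A (r j)) (GN b) jj))) :=
      fun jj _ => mul_nonneg (hmu jj) (neg_nonneg.2 (hdom jj))
    have hz1 : (∑ i, lam i * (supV A v hι l - dotp l (Lmap A (v i)))) = 0 := by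
      have h1 := Finset.sum_nonneg hnn1
      have h2 := Finset.sum_nonneg hnn2
      linarith
    have hz2 : (∑ jj, mu jj * (-(dotp l (Sum.elim (fun j => Lmap A (r j)) (GN b) jj)))) = 0 := by
      have h1 := Finset.sum_nonneg hnn1
      linarith
    have hterm1 := (Finset.sum_eq_zero_iff_of_nonneg hnn1).1 hz1
    have hterm2 := (Finset.sum_eq_zero_iff_of_nonneg hnn2).1 hz2
    -- compute dotp z l'
    rw [hsupP']
    rw [show ((dotp (∑ i, lam i • Lmap A (v i) + ∑ jj, mu jj •
        Sum.elim (fun j => Lmap A (r j)) (GN b) jj) l' : ℝ) : EReal)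
      = ((supV A v hι l' : ℝ) : EReal) from ?_]
    rw [hexp l']
    have hv' : ∀ i, lam i * dotp l' (Lmap A (v i)) = lam i * supV A v hι l' := by
      intro i
      rcases eq_or_ne (lam i) 0 with h0 | h0
      · rw [h0, zero_mul, zero_mul]
      · have hzero := hterm1 i (Finset.mem_univ i)
        have htight : dotp l (Lmap A (v i)) = supV A v hι l := by
          rcases mul_eq_zero.1 hzero with h | h
          · exact absurd h h0
          · linarith [h]
        have hmemT : i ∈ (T l).1 := Finset.mem_filter.2 ⟨Finset.mem_univ i, htight⟩
        rw [hTeq] at hmemT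
        have := (Finset.mem_filter.1 hmemT).2
        rw [this]
    have hr' : ∀ jj, mu jj * dotp l' (Sum.elim (fun j => Lmap A (r j)) (GN b) jj) = 0 := by
      intro jj
      rcases eq_or_ne (mu jj) 0 with h0 | h0
      · rw [h0, zero_mul]
      · have hzero := hterm2 jj (Finset.mem_univ jj)
        have htight : dotp l (Sum.elim (fun j => Lmap A (r j)) (GN b) jj) = 0 := by
          rcases mul_eq_zero.1 hzero with h | h
          · exact absurd h h0
          · linarith [h]
        have hmemT : jj ∈ (T l).2 := Finset.mem_filter.2 ⟨Finset.mem_univ jj, htight⟩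
        rw [hTeq] at hmemT
        have := (Finset.mem_filter.1 hmemT).2
        rw [this, mul_zero]
    rw [Finset.sum_congr rfl (fun i _ => hv' i), Finset.sum_congr rfl (fun jj _ => hr' jj),
      Finset.sum_const_zero, add_zero, ← Finset.sum_mul, hsum, one_mul]
  rw [hNC] at hmem
  obtain ⟨t, ht0, ht⟩ := hmem
  have htb := congrFun ht b
  rw [Pi.smul_apply, smul_eq_mul, hnorm, hnorm'] at htb
  have ht1 : t = 1 := by linarith
  rw [ht, ht1, one_smul]

end Finiteness

theorem statement2 {n m : ℕ} (X : Set (Fin n → ℝ)) (hXne : X.Nonempty)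
    (hpoly : IsPolyhedron X)
    (A : Fin m → Fin n → ℝ) (hA : Function.Injective A) (hm : 0 < m) :
    (∀ (b : Fin m) (ν : Fin m → ℝ), ν ∈ Nbeta b → ν ≠ 0 →
      (IsXCircuit X A b ν ↔
        ∃ F : Set (Fin m → ℝ), IsFaceOf (Pset X A b) F ∧
          {w : Fin m → ℝ | ∀ z ∈ F, ((dotp z w : ℝ) : EReal) = suppFn (Pset X A b) w}
            = {w : Fin m → ℝ | ∃ t : ℝ, 0 ≤ t ∧ w = t • ν})) ∧
    (Lambda X A).Finite := by
  classical
  obtain ⟨ι0, κ0, hf1, hf2, v, r, hX⟩ := polyhedron_vrep hpoly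
  have hι : Nonempty ι0 := by
    obtain ⟨x, hx⟩ := hXne
    rw [hX] at hx
    obtain ⟨lam, -, -, -, hsum, -⟩ := hx
    rcases isEmpty_or_nonempty ι0 with he | h
    · rw [Finset.univ_eq_empty, Finset.sum_empty] at hsum
      norm_num at hsum
    · exact h
  constructor
  · intro b ν hNb hne0
    constructor
    · intro hcirc
      obtain ⟨hface, hNC⟩ := circuit_normal_cone hX hι hcirc
      exact ⟨_, hface, hNC⟩
    · rintro ⟨F, hface, hNC⟩
      exact face_to_circuit hX hι hNb hne0 hface hNC
  · have hL : Lambda X A = ⋃ b, LambdaB X A b := rfl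
    rw [hL]
    exact Set.finite_iUnion (fun b => lambdaB_finite hX hι b)
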